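/- arXiv:2010.11637 — 5 statements merged into one kernel-verified Lean document; each statement's English description precedes it below -/
import Mathlib

section
/- Let k ≥ 1, z ∈ ℝ^n and ŵ_0,…,ŵ_{k−1} ∈ ℝ^n. The function (u_0,…,u_{k−1}) ↦ Σ_{i=0}^{k−1}(x_iᵀ Q x_i + u_iᵀ R u_i) + x_kᵀ P x_k, where x_0 = z and x_{i+1} = A x_i + B u_i + ŵ_i for 0 ≤ i ≤ k−1, has a unique global minimizer over (ℝ^m)^k, and the first component of this minimizer is u_0 = −(R + BᵀPB)⁻¹ Bᵀ (P A z + Σ_{i=0}^{k−1} (Fᵀ)^i P ŵ_i). -/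
open Matrix

noncomputable def evNorm {n : ℕ} (x : Fin n → ℝ) : ℝ := Real.sqrt (∑ i, x i ^ 2)

noncomputable def specNorm {n m : ℕ} (M : Matrix (Fin n) (Fin m) ℝ) : ℝ :=
  sSup {c : ℝ | ∃ x : Fin m → ℝ, evNorm x ≤ 1 ∧ c = evNorm (M *ᵥ x)}

noncomputable def lambdaMin {n : ℕ} (M : Matrix (Fin n) (Fin n) ℝ) : ℝ :=
  sInf {c : ℝ | ∃ x : Fin n → ℝ, evNorm x = 1 ∧ c = x ⬝ᵥ (M *ᵥ x)}

noncomputable def specRad {n : ℕ} (M : Matrix (Fin n) (Fin n) ℝ) : ENNReal :=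
  spectralRadius ℂ (M.map Complex.ofReal)

noncomputable def seqState {n m : ℕ} (A : Matrix (Fin n) (Fin n) ℝ)
    (B : Matrix (Fin n) (Fin m) ℝ) (x0 : Fin n → ℝ)
    (u : ℕ → Fin m → ℝ) (w : ℕ → Fin n → ℝ) : ℕ → Fin n → ℝ
  | 0 => x0
  | t + 1 => A *ᵥ seqState A B x0 u w t + B *ᵥ u t + w t

noncomputable def trajCost {n m : ℕ} (A : Matrix (Fin n) (Fin n) ℝ)
    (B : Matrix (Fin n) (Fin m) ℝ) (Q : Matrix (Fin n) (Fin n) ℝ)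
    (R : Matrix (Fin m) (Fin m) ℝ) (Qf : Matrix (Fin n) (Fin n) ℝ)
    (x0 : Fin n → ℝ) (w : ℕ → Fin n → ℝ) (T : ℕ) (u : ℕ → Fin m → ℝ) : ℝ :=
  (∑ t ∈ Finset.range T,
      (seqState A B x0 u w t ⬝ᵥ (Q *ᵥ seqState A B x0 u w t) + u t ⬝ᵥ (R *ᵥ u t)))
    + seqState A B x0 u w T ⬝ᵥ (Qf *ᵥ seqState A B x0 u w T)

noncomputable def mpcCost {n m : ℕ} (A : Matrix (Fin n) (Fin n) ℝ)
    (B : Matrix (Fin n) (Fin m) ℝ) (Q : Matrix (Fin n) (Fin n) ℝ)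
    (R : Matrix (Fin m) (Fin m) ℝ) (P : Matrix (Fin n) (Fin n) ℝ)
    (z : Fin n → ℝ) (what : ℕ → Fin n → ℝ) (k : ℕ) (u : Fin k → Fin m → ℝ) : ℝ :=
  trajCost A B Q R P z what k (fun t => if h : t < k then u ⟨t, h⟩ else 0)

/-! ### Auxiliary lemmas -/

lemma nd {α β : Type*} [Fintype α] [Fintype β] (M : Matrix α β ℝ) (x : β → ℝ) (y : α → ℝ) :
    (M *ᵥ x) ⬝ᵥ y = x ⬝ᵥ (Mᵀ *ᵥ y) := by
  rw [dotProduct_comm, Matrix.dotProduct_mulVec, dotProduct_comm, Matrix.mulVec_transpose]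

lemma sqexp {m : ℕ} (S : Matrix (Fin m) (Fin m) ℝ) (hS1 : S * S⁻¹ = 1) (hS2 : S⁻¹ * S = 1)
    (hSinvT : (S⁻¹)ᵀ = S⁻¹) (u d : Fin m → ℝ) :
    (u + S⁻¹ *ᵥ d) ⬝ᵥ (S *ᵥ (u + S⁻¹ *ᵥ d))
      = u ⬝ᵥ (S *ᵥ u) + 2 * (u ⬝ᵥ d) + d ⬝ᵥ (S⁻¹ *ᵥ d) := by
  have hc : S *ᵥ (S⁻¹ *ᵥ d) = d := by
    rw [Matrix.mulVec_mulVec, hS1, Matrix.one_mulVec]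
  have hc2 : S⁻¹ *ᵥ (S *ᵥ u) = u := by
    rw [Matrix.mulVec_mulVec, hS2, Matrix.one_mulVec]
  simp only [Matrix.mulVec_add, dotProduct_add, add_dotProduct, hc]
  rw [nd S⁻¹ d, hSinvT, hc2, nd S⁻¹ d d, hSinvT]
  rw [dotProduct_comm d u]; ring

noncomputable def qv {n : ℕ} (F P : Matrix (Fin n) (Fin n) ℝ) (w : ℕ → Fin n → ℝ) (T : ℕ) :
    Fin n → ℝ := ∑ i ∈ Finset.range T, ((Fᵀ) ^ (i + 1) * P) *ᵥ w i

lemma qv_zero {n : ℕ} (F P : Matrix (Fin n) (Fin n) ℝ) (w : ℕ → Fin n → ℝ) :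
    qv F P w 0 = 0 := by simp [qv]

lemma qv_succ {n : ℕ} (F P : Matrix (Fin n) (Fin n) ℝ) (w : ℕ → Fin n → ℝ) (T : ℕ) :
    qv F P w (T + 1) = Fᵀ *ᵥ (P *ᵥ w 0 + qv F P (fun i => w (i + 1)) T) := by
  unfold qv
  have hsum : ∀ (f : ℕ → Fin n → ℝ) (s : Finset ℕ),
      Fᵀ *ᵥ (∑ i ∈ s, f i) = ∑ i ∈ s, Fᵀ *ᵥ f i := by
    intro f s
    ext j
    simp [Matrix.mulVec, dotProduct, Finset.sum_apply, Finset.mul_sum]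
    rw [Finset.sum_comm]
  rw [Finset.sum_range_succ', Matrix.mulVec_add, hsum, add_comm]
  congr 1
  · rw [zero_add, pow_one, ← Matrix.mulVec_mulVec]
  · refine Finset.sum_congr rfl fun i _ => ?_
    rw [Matrix.mulVec_mulVec, pow_succ', mul_assoc]

lemma seqState_zero {n m : ℕ} (A : Matrix (Fin n) (Fin n) ℝ) (B : Matrix (Fin n) (Fin m) ℝ)
    (x0 : Fin n → ℝ) (u : ℕ → Fin m → ℝ) (w : ℕ → Fin n → ℝ) :
    seqState A B x0 u w 0 = x0 := rfl

lemma seqState_succ {n m : ℕ} (A : Matrix (Fin n) (Fin n) ℝ) (B : Matrix (Fin n) (Fin m) ℝ)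
    (x0 : Fin n → ℝ) (u : ℕ → Fin m → ℝ) (w : ℕ → Fin n → ℝ) (t : ℕ) :
    seqState A B x0 u w (t + 1) = A *ᵥ seqState A B x0 u w t + B *ᵥ u t + w t := rfl

lemma seqState_shift {n m : ℕ} (A : Matrix (Fin n) (Fin n) ℝ) (B : Matrix (Fin n) (Fin m) ℝ)
    (x0 : Fin n → ℝ) (u : ℕ → Fin m → ℝ) (w : ℕ → Fin n → ℝ) (t : ℕ) :
    seqState A B (A *ᵥ x0 + B *ᵥ u 0 + w 0) (fun i => u (i + 1)) (fun i => w (i + 1)) t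
      = seqState A B x0 u w (t + 1) := by
  induction t with
  | zero => rfl
  | succ t ih => simp only [seqState_succ, ih]

lemma seqState_congr {n m : ℕ} {A : Matrix (Fin n) (Fin n) ℝ} {B : Matrix (Fin n) (Fin m) ℝ}
    {x0 : Fin n → ℝ} {u v : ℕ → Fin m → ℝ} {w : ℕ → Fin n → ℝ} (t : ℕ)
    (h : ∀ s < t, u s = v s) :
    seqState A B x0 u w t = seqState A B x0 v w t := by
  induction t with
  | zero => rfl
  | succ t ih =>
    rw [seqState_succ, seqState_succ, ih (fun s hs => h s (hs.trans (Nat.lt_succ_self t))),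
      h t (Nat.lt_succ_self t)]

lemma trajCost_congr {n m : ℕ} {A : Matrix (Fin n) (Fin n) ℝ} {B : Matrix (Fin n) (Fin m) ℝ}
    {Q : Matrix (Fin n) (Fin n) ℝ} {R : Matrix (Fin m) (Fin m) ℝ}
    {Qf : Matrix (Fin n) (Fin n) ℝ} {x0 : Fin n → ℝ} {w : ℕ → Fin n → ℝ} {T : ℕ}
    {u v : ℕ → Fin m → ℝ} (h : ∀ t < T, u t = v t) :
    trajCost A B Q R Qf x0 w T u = trajCost A B Q R Qf x0 w T v := by
  unfold trajCost
  congr 1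
  · refine Finset.sum_congr rfl fun t ht => ?_
    have ht' := Finset.mem_range.mp ht
    rw [seqState_congr t (fun s hs => h s (hs.trans ht')), h t ht']
  · rw [seqState_congr T h]

lemma trajCost_succ {n m : ℕ} (A : Matrix (Fin n) (Fin n) ℝ) (B : Matrix (Fin n) (Fin m) ℝ)
    (Q Qf : Matrix (Fin n) (Fin n) ℝ) (R : Matrix (Fin m) (Fin m) ℝ)
    (x0 : Fin n → ℝ) (w : ℕ → Fin n → ℝ) (T : ℕ) (u : ℕ → Fin m → ℝ) :
    trajCost A B Q R Qf x0 w (T + 1) u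
      = x0 ⬝ᵥ (Q *ᵥ x0) + u 0 ⬝ᵥ (R *ᵥ u 0)
        + trajCost A B Q R Qf (A *ᵥ x0 + B *ᵥ u 0 + w 0)
            (fun i => w (i + 1)) T (fun i => u (i + 1)) := by
  unfold trajCost
  rw [Finset.sum_range_succ']
  simp only [seqState_shift, seqState_zero]
  ring

noncomputable def ccst {n m : ℕ} (B : Matrix (Fin n) (Fin m) ℝ)
    (P F : Matrix (Fin n) (Fin n) ℝ) (S : Matrix (Fin m) (Fin m) ℝ) :
    ℕ → (ℕ → Fin n → ℝ) → ℝ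
  | 0, _ => 0
  | T + 1, w =>
    ccst B P F S T (fun i => w (i + 1)) + w 0 ⬝ᵥ (P *ᵥ w 0)
      + 2 * (qv F P (fun i => w (i + 1)) T ⬝ᵥ w 0)
      - (P *ᵥ w 0 + qv F P (fun i => w (i + 1)) T) ⬝ᵥ
          (B *ᵥ (S⁻¹ *ᵥ (Bᵀ *ᵥ (P *ᵥ w 0 + qv F P (fun i => w (i + 1)) T))))

lemma step {n m : ℕ} (A : Matrix (Fin n) (Fin n) ℝ) (B : Matrix (Fin n) (Fin m) ℝ)
    (Q P F : Matrix (Fin n) (Fin n) ℝ) (R S : Matrix (Fin m) (Fin m) ℝ)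
    (hPt : Pᵀ = P)
    (hS1 : S * S⁻¹ = 1) (hS2 : S⁻¹ * S = 1) (hSinvT : (S⁻¹)ᵀ = S⁻¹)
    (hSmv : ∀ v : Fin m → ℝ, S *ᵥ v = R *ᵥ v + Bᵀ *ᵥ (P *ᵥ (B *ᵥ v)))
    (hDmv : ∀ x : Fin n → ℝ, x ⬝ᵥ Q *ᵥ x + x ⬝ᵥ Aᵀ *ᵥ P *ᵥ A *ᵥ x
        = x ⬝ᵥ P *ᵥ x + x ⬝ᵥ Aᵀ *ᵥ P *ᵥ B *ᵥ S⁻¹ *ᵥ Bᵀ *ᵥ P *ᵥ A *ᵥ x)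
    (hFmv : ∀ x : Fin n → ℝ, F *ᵥ x = A *ᵥ x - B *ᵥ (S⁻¹ *ᵥ (Bᵀ *ᵥ (P *ᵥ (A *ᵥ x)))))
    (x0 : Fin n → ℝ) (u0 : Fin m → ℝ) (w0 q' : Fin n → ℝ) (c' : ℝ) :
    x0 ⬝ᵥ (Q *ᵥ x0) + u0 ⬝ᵥ (R *ᵥ u0)
      + ((A *ᵥ x0 + B *ᵥ u0 + w0) ⬝ᵥ (P *ᵥ (A *ᵥ x0 + B *ᵥ u0 + w0))
         + 2 * (q' ⬝ᵥ (A *ᵥ x0 + B *ᵥ u0 + w0)) + c')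
    = x0 ⬝ᵥ (P *ᵥ x0) + 2 * ((Fᵀ *ᵥ (P *ᵥ w0 + q')) ⬝ᵥ x0)
      + (c' + w0 ⬝ᵥ (P *ᵥ w0) + 2 * (q' ⬝ᵥ w0)
         - (P *ᵥ w0 + q') ⬝ᵥ (B *ᵥ (S⁻¹ *ᵥ (Bᵀ *ᵥ (P *ᵥ w0 + q')))))
      + (u0 + S⁻¹ *ᵥ (Bᵀ *ᵥ (P *ᵥ (A *ᵥ x0 + w0) + q')))
          ⬝ᵥ (S *ᵥ (u0 + S⁻¹ *ᵥ (Bᵀ *ᵥ (P *ᵥ (A *ᵥ x0 + w0) + q')))) := by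
  rw [sqexp S hS1 hS2 hSinvT u0 (Bᵀ *ᵥ (P *ᵥ (A *ᵥ x0 + w0) + q'))]
  rw [nd Fᵀ (P *ᵥ w0 + q') x0, transpose_transpose, hFmv]
  rw [nd Bᵀ (P *ᵥ (A *ᵥ x0 + w0) + q') (S⁻¹ *ᵥ (Bᵀ *ᵥ (P *ᵥ (A *ᵥ x0 + w0) + q'))),
      transpose_transpose]
  rw [hSmv u0]
  have hD := hDmv x0
  have flip : ∀ {a b : ℕ} (M : Matrix (Fin a) (Fin b) ℝ) (x : Fin a → ℝ) (y : Fin b → ℝ),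
      x ⬝ᵥ (M *ᵥ y) = (M *ᵥ y) ⬝ᵥ x := fun M x y => dotProduct_comm x (M *ᵥ y)
  simp only [Matrix.mulVec_add, dotProduct_add, add_dotProduct, dotProduct_sub,
    sub_dotProduct, Matrix.mulVec_sub] at hD ⊢
  simp only [nd, transpose_transpose, hPt, hSinvT] at hD ⊢
  have e1 : x0 ⬝ᵥ Aᵀ *ᵥ P *ᵥ B *ᵥ u0 = u0 ⬝ᵥ Bᵀ *ᵥ P *ᵥ A *ᵥ x0 := by
    rw [flip]; simp only [nd, transpose_transpose, hPt, hSinvT]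
  have e2 : x0 ⬝ᵥ Aᵀ *ᵥ P *ᵥ w0 = w0 ⬝ᵥ P *ᵥ A *ᵥ x0 := by
    rw [flip]; simp only [nd, transpose_transpose, hPt, hSinvT]
  have e3 : w0 ⬝ᵥ P *ᵥ B *ᵥ u0 = u0 ⬝ᵥ Bᵀ *ᵥ P *ᵥ w0 := by
    rw [flip]; simp only [nd, transpose_transpose, hPt, hSinvT]
  have e4 : q' ⬝ᵥ B *ᵥ u0 = u0 ⬝ᵥ Bᵀ *ᵥ q' := by
    rw [flip]; simp only [nd, transpose_transpose, hPt, hSinvT]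
  have e5 : x0 ⬝ᵥ Aᵀ *ᵥ P *ᵥ B *ᵥ S⁻¹ *ᵥ Bᵀ *ᵥ P *ᵥ w0
      = w0 ⬝ᵥ P *ᵥ B *ᵥ S⁻¹ *ᵥ Bᵀ *ᵥ P *ᵥ A *ᵥ x0 := by
    rw [flip]; simp only [nd, transpose_transpose, hPt, hSinvT]
  have e6 : x0 ⬝ᵥ Aᵀ *ᵥ P *ᵥ B *ᵥ S⁻¹ *ᵥ Bᵀ *ᵥ q'
      = q' ⬝ᵥ B *ᵥ S⁻¹ *ᵥ Bᵀ *ᵥ P *ᵥ A *ᵥ x0 := by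
    rw [flip]; simp only [nd, transpose_transpose, hPt, hSinvT]
  linear_combination hD + e1 + e2 + e3 + 2 * e4 - e5 - e6

set_option maxRecDepth 4000 in
lemma cost_eq {n m : ℕ} (A : Matrix (Fin n) (Fin n) ℝ) (B : Matrix (Fin n) (Fin m) ℝ)
    (Q P F : Matrix (Fin n) (Fin n) ℝ) (R S : Matrix (Fin m) (Fin m) ℝ)
    (hPt : Pᵀ = P)
    (hS1 : S * S⁻¹ = 1) (hS2 : S⁻¹ * S = 1) (hSinvT : (S⁻¹)ᵀ = S⁻¹)
    (hSmv : ∀ v : Fin m → ℝ, S *ᵥ v = R *ᵥ v + Bᵀ *ᵥ (P *ᵥ (B *ᵥ v)))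
    (hDmv : ∀ x : Fin n → ℝ, x ⬝ᵥ Q *ᵥ x + x ⬝ᵥ Aᵀ *ᵥ P *ᵥ A *ᵥ x
        = x ⬝ᵥ P *ᵥ x + x ⬝ᵥ Aᵀ *ᵥ P *ᵥ B *ᵥ S⁻¹ *ᵥ Bᵀ *ᵥ P *ᵥ A *ᵥ x)
    (hFmv : ∀ x : Fin n → ℝ, F *ᵥ x = A *ᵥ x - B *ᵥ (S⁻¹ *ᵥ (Bᵀ *ᵥ (P *ᵥ (A *ᵥ x))))) :
    ∀ (T : ℕ) (x0 : Fin n → ℝ) (w : ℕ → Fin n → ℝ) (u : ℕ → Fin m → ℝ),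
    trajCost A B Q R P x0 w T u
      = x0 ⬝ᵥ (P *ᵥ x0) + 2 * (qv F P w T ⬝ᵥ x0) + ccst B P F S T w
        + ∑ t ∈ Finset.range T,
            (u t + S⁻¹ *ᵥ (Bᵀ *ᵥ (P *ᵥ (A *ᵥ seqState A B x0 u w t + w t)
               + qv F P (fun i => w (i + t + 1)) (T - (t + 1))))) ⬝ᵥ
            (S *ᵥ (u t + S⁻¹ *ᵥ (Bᵀ *ᵥ (P *ᵥ (A *ᵥ seqState A B x0 u w t + w t)
               + qv F P (fun i => w (i + t + 1)) (T - (t + 1)))))) := by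
  intro T
  induction T with
  | zero =>
    intro x0 w u
    simp [trajCost, seqState_zero, qv_zero, ccst]
  | succ T ih =>
    intro x0 w u
    rw [trajCost_succ, ih (A *ᵥ x0 + B *ᵥ u 0 + w 0) (fun i => w (i + 1)) (fun i => u (i + 1)),
      Finset.sum_range_succ']
    simp only [seqState_shift, seqState_zero, Nat.add_zero, Nat.zero_add, Nat.add_sub_cancel,
      show ∀ t : ℕ, T + 1 - (t + 1 + 1) = T - (t + 1) from fun t => by omega,
      show ∀ i t : ℕ, i + t + 1 + 1 = i + (t + 1) + 1 from fun i t => by omega]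
    rw [qv_succ]
    show _ = _ + _ + (ccst B P F S T (fun i => w (i + 1)) + _ + _ - _) + _
    linear_combination step A B Q P F R S hPt hS1 hS2 hSinvT hSmv hDmv hFmv
      x0 (u 0) (w 0) (qv F P (fun i => w (i + 1)) T) (ccst B P F S T (fun i => w (i + 1)))

noncomputable def ctrl {n m : ℕ} (A : Matrix (Fin n) (Fin n) ℝ) (B : Matrix (Fin n) (Fin m) ℝ)
    (P F : Matrix (Fin n) (Fin n) ℝ) (S : Matrix (Fin m) (Fin m) ℝ) (T : ℕ)
    (w : ℕ → Fin n → ℝ) (t : ℕ) (x : Fin n → ℝ) : Fin m → ℝ :=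
  -(S⁻¹ *ᵥ (Bᵀ *ᵥ (P *ᵥ (A *ᵥ x + w t) + qv F P (fun i => w (i + t + 1)) (T - (t + 1)))))

noncomputable def xop {n m : ℕ} (A : Matrix (Fin n) (Fin n) ℝ) (B : Matrix (Fin n) (Fin m) ℝ)
    (P F : Matrix (Fin n) (Fin n) ℝ) (S : Matrix (Fin m) (Fin m) ℝ) (T : ℕ)
    (w : ℕ → Fin n → ℝ) (x0 : Fin n → ℝ) : ℕ → Fin n → ℝ
  | 0 => x0
  | t + 1 => A *ᵥ xop A B P F S T w x0 t
      + B *ᵥ ctrl A B P F S T w t (xop A B P F S T w x0 t) + w t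

noncomputable def uop {n m : ℕ} (A : Matrix (Fin n) (Fin n) ℝ) (B : Matrix (Fin n) (Fin m) ℝ)
    (P F : Matrix (Fin n) (Fin n) ℝ) (S : Matrix (Fin m) (Fin m) ℝ) (T : ℕ)
    (w : ℕ → Fin n → ℝ) (x0 : Fin n → ℝ) (t : ℕ) : Fin m → ℝ :=
  ctrl A B P F S T w t (xop A B P F S T w x0 t)

lemma seqState_uop {n m : ℕ} (A : Matrix (Fin n) (Fin n) ℝ) (B : Matrix (Fin n) (Fin m) ℝ)
    (P F : Matrix (Fin n) (Fin n) ℝ) (S : Matrix (Fin m) (Fin m) ℝ) (T : ℕ)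
    (w : ℕ → Fin n → ℝ) (x0 : Fin n → ℝ) (t : ℕ) :
    seqState A B x0 (uop A B P F S T w x0) w t = xop A B P F S T w x0 t := by
  induction t with
  | zero => rfl
  | succ t ih => rw [seqState_succ, ih]; rfl

theorem stmt0 (n m k : ℕ) (hk : 1 ≤ k)
    (A : Matrix (Fin n) (Fin n) ℝ) (B : Matrix (Fin n) (Fin m) ℝ)
    (Q : Matrix (Fin n) (Fin n) ℝ) (R : Matrix (Fin m) (Fin m) ℝ)
    (P : Matrix (Fin n) (Fin n) ℝ)
    (hQ : Q.PosSemidef) (hR : R.PosDef) (hP : P.PosDef)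
    (hDARE : P = Q + Aᵀ * P * A - Aᵀ * P * B * (R + Bᵀ * P * B)⁻¹ * (Bᵀ * P * A))
    (F : Matrix (Fin n) (Fin n) ℝ)
    (hF : F = A - B * ((R + Bᵀ * P * B)⁻¹ * (Bᵀ * P * A)))
    (z : Fin n → ℝ) (what : ℕ → Fin n → ℝ) :
    (∃! u : Fin k → Fin m → ℝ,
      ∀ v : Fin k → Fin m → ℝ, mpcCost A B Q R P z what k u ≤ mpcCost A B Q R P z what k v) ∧
    ∀ u : Fin k → Fin m → ℝ,
      (∀ v : Fin k → Fin m → ℝ, mpcCost A B Q R P z what k u ≤ mpcCost A B Q R P z what k v) →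
      u ⟨0, hk⟩ = -((((R + Bᵀ * P * B)⁻¹ * Bᵀ) *ᵥ
        (P *ᵥ (A *ᵥ z) + ∑ i ∈ Finset.range k, ((Fᵀ) ^ i * P) *ᵥ what i))) := by
  obtain ⟨k', rfl⟩ : ∃ k', k = k' + 1 := ⟨k - 1, by omega⟩
  set S := R + Bᵀ * P * B with hSdef
  have hSpd : S.PosDef := hR.add_posSemidef (hP.posSemidef.conjTranspose_mul_mul_same B)
  have hdet : IsUnit S.det := isUnit_iff_ne_zero.2 (ne_of_gt hSpd.det_pos)
  have hS1 : S * S⁻¹ = 1 := Matrix.mul_nonsing_inv S hdet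
  have hS2 : S⁻¹ * S = 1 := Matrix.nonsing_inv_mul S hdet
  have hPt : Pᵀ = P := hP.isHermitian
  have hRt : Rᵀ = R := hR.isHermitian
  have hSt : Sᵀ = S := hSpd.isHermitian
  have hSinvT : (S⁻¹)ᵀ = S⁻¹ := by rw [Matrix.transpose_nonsing_inv, hSt]
  have hSmv : ∀ v : Fin m → ℝ, S *ᵥ v = R *ᵥ v + Bᵀ *ᵥ (P *ᵥ (B *ᵥ v)) := by
    intro v
    simp [hSdef, Matrix.add_mulVec, ← Matrix.mulVec_mulVec]
  have hFmv : ∀ x : Fin n → ℝ, F *ᵥ x = A *ᵥ x - B *ᵥ (S⁻¹ *ᵥ (Bᵀ *ᵥ (P *ᵥ (A *ᵥ x)))) := by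
    intro x
    rw [hF]
    simp [Matrix.sub_mulVec, ← Matrix.mulVec_mulVec]
  have hDmv : ∀ x : Fin n → ℝ, x ⬝ᵥ Q *ᵥ x + x ⬝ᵥ Aᵀ *ᵥ P *ᵥ A *ᵥ x
      = x ⬝ᵥ P *ᵥ x + x ⬝ᵥ Aᵀ *ᵥ P *ᵥ B *ᵥ S⁻¹ *ᵥ Bᵀ *ᵥ P *ᵥ A *ᵥ x := by
    intro x
    have h : P *ᵥ x = (Q + Aᵀ * P * A - Aᵀ * P * B * S⁻¹ * (Bᵀ * P * A)) *ᵥ x := by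
      rw [← hDARE]
    have h2 := congrArg (fun v => x ⬝ᵥ v) h
    simp only [Matrix.add_mulVec, Matrix.sub_mulVec, dotProduct_add, dotProduct_sub,
      ← Matrix.mulVec_mulVec] at h2
    linarith [h2]
  have hce := cost_eq A B Q P F R S hPt hS1 hS2 hSinvT hSmv hDmv hFmv (k' + 1) z what
  obtain ⟨C, hC⟩ : ∃ C : ℝ, ∀ u : ℕ → Fin m → ℝ,
      trajCost A B Q R P z what (k' + 1) u
        = C + ∑ t ∈ Finset.range (k' + 1),
            (u t + S⁻¹ *ᵥ (Bᵀ *ᵥ (P *ᵥ (A *ᵥ seqState A B z u what t + what t)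
               + qv F P (fun i => what (i + t + 1)) (k' + 1 - (t + 1))))) ⬝ᵥ
            (S *ᵥ (u t + S⁻¹ *ᵥ (Bᵀ *ᵥ (P *ᵥ (A *ᵥ seqState A B z u what t + what t)
               + qv F P (fun i => what (i + t + 1)) (k' + 1 - (t + 1)))))) :=
    ⟨_, fun u => hce u⟩
  set uo : ℕ → Fin m → ℝ := uop A B P F S (k' + 1) what z with huo
  have hdz : ∀ t, (uo t + S⁻¹ *ᵥ (Bᵀ *ᵥ (P *ᵥ (A *ᵥ seqState A B z uo what t + what t)
      + qv F P (fun i => what (i + t + 1)) (k' + 1 - (t + 1))))) = 0 := by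
    intro t
    rw [huo, seqState_uop]
    simp [uop, ctrl]
  have hopt : trajCost A B Q R P z what (k' + 1) uo = C := by
    rw [hC uo]
    simp only [hdz, Matrix.mulVec_zero, dotProduct_zero, Finset.sum_const_zero, add_zero]
  have hlow : ∀ u : ℕ → Fin m → ℝ, C ≤ trajCost A B Q R P z what (k' + 1) u := by
    intro u
    rw [hC u]
    have h0 : (0:ℝ) ≤ ∑ t ∈ Finset.range (k' + 1),
        (u t + S⁻¹ *ᵥ (Bᵀ *ᵥ (P *ᵥ (A *ᵥ seqState A B z u what t + what t)
           + qv F P (fun i => what (i + t + 1)) (k' + 1 - (t + 1))))) ⬝ᵥ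
        (S *ᵥ (u t + S⁻¹ *ᵥ (Bᵀ *ᵥ (P *ᵥ (A *ᵥ seqState A B z u what t + what t)
           + qv F P (fun i => what (i + t + 1)) (k' + 1 - (t + 1)))))) :=
      Finset.sum_nonneg fun t _ => (by have h := hSpd.posSemidef.dotProduct_mulVec_nonneg; simp only [star_trivial] at h; exact h _)
    linarith
  have huniq : ∀ u : ℕ → Fin m → ℝ, trajCost A B Q R P z what (k' + 1) u ≤ C →
      ∀ t, t < k' + 1 → u t = uo t := by
    intro u hle
    have hzero : ∀ t ∈ Finset.range (k' + 1),
        (u t + S⁻¹ *ᵥ (Bᵀ *ᵥ (P *ᵥ (A *ᵥ seqState A B z u what t + what t)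
           + qv F P (fun i => what (i + t + 1)) (k' + 1 - (t + 1))))) ⬝ᵥ
        (S *ᵥ (u t + S⁻¹ *ᵥ (Bᵀ *ᵥ (P *ᵥ (A *ᵥ seqState A B z u what t + what t)
           + qv F P (fun i => what (i + t + 1)) (k' + 1 - (t + 1)))))) = 0 := by
      rw [hC u] at hle
      have hsle : ∑ t ∈ Finset.range (k' + 1),
          (u t + S⁻¹ *ᵥ (Bᵀ *ᵥ (P *ᵥ (A *ᵥ seqState A B z u what t + what t)
             + qv F P (fun i => what (i + t + 1)) (k' + 1 - (t + 1))))) ⬝ᵥ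
          (S *ᵥ (u t + S⁻¹ *ᵥ (Bᵀ *ᵥ (P *ᵥ (A *ᵥ seqState A B z u what t + what t)
             + qv F P (fun i => what (i + t + 1)) (k' + 1 - (t + 1)))))) ≤ 0 := by linarith
      have := (Finset.sum_eq_zero_iff_of_nonneg
        (fun t _ => (by have h := hSpd.posSemidef.dotProduct_mulVec_nonneg; simp only [star_trivial] at h; exact h _))).mp (le_antisymm hsle
          (Finset.sum_nonneg fun t _ => (by have h := hSpd.posSemidef.dotProduct_mulVec_nonneg; simp only [star_trivial] at h; exact h _)))
      exact this
    have hvzero : ∀ t, t < k' + 1 →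
        (u t + S⁻¹ *ᵥ (Bᵀ *ᵥ (P *ᵥ (A *ᵥ seqState A B z u what t + what t)
           + qv F P (fun i => what (i + t + 1)) (k' + 1 - (t + 1))))) = 0 := by
      intro t ht
      by_contra hne
      exact absurd (hzero t (Finset.mem_range.mpr ht)) (ne_of_gt (by have h := hSpd.dotProduct_mulVec_pos hne; simp only [star_trivial] at h; exact h))
    intro t
    induction t using Nat.strong_induction_on with
    | _ t ih =>
      intro ht
      have hst : seqState A B z u what t = seqState A B z uo what t :=
        seqState_congr t (fun s hs => ih s hs (hs.trans ht))
      have h0 := hvzero t ht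
      rw [hst, huo, seqState_uop] at h0
      have : u t = -(S⁻¹ *ᵥ (Bᵀ *ᵥ (P *ᵥ (A *ᵥ xop A B P F S (k' + 1) what z t + what t)
          + qv F P (fun i => what (i + t + 1)) (k' + 1 - (t + 1))))) :=
        eq_neg_of_add_eq_zero_left h0
      rw [this, huo]
      rfl
  -- bridging between Fin-indexed and ℕ-indexed controls
  have hmpc : ∀ u : Fin (k' + 1) → Fin m → ℝ, mpcCost A B Q R P z what (k' + 1) u
      = trajCost A B Q R P z what (k' + 1)
          (fun t => if h : t < k' + 1 then u ⟨t, h⟩ else 0) := fun u => rfl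
  have hextuo : trajCost A B Q R P z what (k' + 1)
      (fun t => if h : t < k' + 1 then (fun i : Fin (k' + 1) => uo i) ⟨t, h⟩ else 0)
      = trajCost A B Q R P z what (k' + 1) uo := by
    apply trajCost_congr
    intro t ht
    simp [ht]
  have hminuo : ∀ v : Fin (k' + 1) → Fin m → ℝ,
      mpcCost A B Q R P z what (k' + 1) (fun t => uo t) ≤ mpcCost A B Q R P z what (k' + 1) v := by
    intro v
    rw [hmpc, hmpc]
    calc trajCost A B Q R P z what (k' + 1)
          (fun t => if h : t < k' + 1 then (fun i : Fin (k' + 1) => uo i) ⟨t, h⟩ else 0)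
        = trajCost A B Q R P z what (k' + 1) uo := hextuo
      _ = C := hopt
      _ ≤ _ := hlow _
  have hagree : ∀ u : Fin (k' + 1) → Fin m → ℝ,
      (∀ v : Fin (k' + 1) → Fin m → ℝ,
        mpcCost A B Q R P z what (k' + 1) u ≤ mpcCost A B Q R P z what (k' + 1) v) →
      ∀ t : ℕ, ∀ h : t < k' + 1, u ⟨t, h⟩ = uo t := by
    intro u hu t ht
    have hle : trajCost A B Q R P z what (k' + 1)
        (fun t => if h : t < k' + 1 then u ⟨t, h⟩ else 0) ≤ C := by
      rw [← hmpc]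
      calc mpcCost A B Q R P z what (k' + 1) u
          ≤ mpcCost A B Q R P z what (k' + 1) (fun t => uo t) := hu _
        _ = C := by rw [hmpc]; rw [hextuo]; exact hopt
    have := huniq _ hle t ht
    simpa [ht] using this
  refine ⟨⟨fun t => uo t, hminuo, ?_⟩, ?_⟩
  · intro y hy
    funext i
    have := hagree y hy i i.isLt
    simpa using this
  · intro u hu
    have h0 := hagree u hu 0 (Nat.succ_pos k')
    rw [h0, huo]
    show ctrl A B P F S (k' + 1) what 0 (xop A B P F S (k' + 1) what z 0) = _
    have hqsum : P *ᵥ (A *ᵥ z + what 0) + qv F P (fun i => what (i + 0 + 1)) (k' + 1 - (0 + 1))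
        = P *ᵥ (A *ᵥ z) + ∑ i ∈ Finset.range (k' + 1), ((Fᵀ) ^ i * P) *ᵥ what i := by
      rw [Finset.sum_range_succ', Matrix.mulVec_add]
      simp only [Nat.add_zero, Nat.zero_add, Nat.add_sub_cancel, qv, pow_zero, Matrix.one_mul]
      abel
    show -(S⁻¹ *ᵥ (Bᵀ *ᵥ (P *ᵥ (A *ᵥ (xop A B P F S (k' + 1) what z 0) + what 0)
        + qv F P (fun i => what (i + 0 + 1)) (k' + 1 - (0 + 1))))) = _
    show -(S⁻¹ *ᵥ (Bᵀ *ᵥ (P *ᵥ (A *ᵥ z + what 0)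
        + qv F P (fun i => what (i + 0 + 1)) (k' + 1 - (0 + 1))))) = _
    rw [hqsum, Matrix.mulVec_mulVec]
end

section
/- Assume Q_f = P. For any η_0,…,η_{T−1} ∈ ℝ^n, define the control sequence u^η in closed loop by u^η_t = −(R + BᵀPB)⁻¹ Bᵀ (P A x_t + ψ_t − η_t), where x is the trajectory generated by u^η from x_0. Then J(u^η) = Σ_{t=0}^{T−1}( w_tᵀ P w_t + 2 w_tᵀ Σ_{i=1}^{T−t−1} (Fᵀ)^i P w_{t+i} − ψ_tᵀ H ψ_t ) + Σ_{t=0}^{T−1} η_tᵀ H η_t + x_0ᵀ P x_0 + 2 x_0ᵀ Σ_{i=0}^{T−1} (Fᵀ)^{i+1} P w_i. -/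
open Matrix

section Helpers

lemma mulVec_sum' {k l : ℕ} (M : Matrix (Fin k) (Fin l) ℝ) (s : Finset ℕ) (f : ℕ → Fin l → ℝ) :
    M *ᵥ (∑ i ∈ s, f i) = ∑ i ∈ s, M *ᵥ f i := by
  induction s using Finset.cons_induction with
  | empty => simp
  | cons a s ha ih => rw [Finset.sum_cons, Finset.sum_cons, Matrix.mulVec_add, ih]

lemma dp_flip {k l : ℕ} (M : Matrix (Fin k) (Fin l) ℝ) (c : Fin k → ℝ) (d : Fin l → ℝ) :
    c ⬝ᵥ (M *ᵥ d) = d ⬝ᵥ (Mᵀ *ᵥ c) := by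
  rw [Matrix.dotProduct_mulVec, ← Matrix.vecMul_transpose, dotProduct_comm, Matrix.transpose_transpose]

lemma dp_flipL {k l : ℕ} (M : Matrix (Fin k) (Fin l) ℝ) (c : Fin l → ℝ) (d : Fin k → ℝ) :
    (M *ᵥ c) ⬝ᵥ d = c ⬝ᵥ (Mᵀ *ᵥ d) := by
  rw [dotProduct_comm, dp_flip]

end Helpers

theorem stmt2 (n m T : ℕ)
    (A : Matrix (Fin n) (Fin n) ℝ) (B : Matrix (Fin n) (Fin m) ℝ)
    (Q : Matrix (Fin n) (Fin n) ℝ) (R : Matrix (Fin m) (Fin m) ℝ)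
    (P : Matrix (Fin n) (Fin n) ℝ)
    (hQ : Q.PosSemidef) (hR : R.PosDef) (hP : P.PosDef)
    (hDARE : P = Q + Aᵀ * P * A - Aᵀ * P * B * (R + Bᵀ * P * B)⁻¹ * (Bᵀ * P * A))
    (F : Matrix (Fin n) (Fin n) ℝ)
    (hF : F = A - B * ((R + Bᵀ * P * B)⁻¹ * (Bᵀ * P * A)))
    (Hmat : Matrix (Fin n) (Fin n) ℝ)
    (hHmat : Hmat = B * (R + Bᵀ * P * B)⁻¹ * Bᵀ)
    (x0 : Fin n → ℝ) (w η : ℕ → Fin n → ℝ)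
    (ψ : ℕ → Fin n → ℝ)
    (hψ : ∀ t, ψ t = ∑ i ∈ Finset.range (T - t), ((Fᵀ) ^ i * P) *ᵥ w (t + i))
    (x : ℕ → Fin n → ℝ) (u : ℕ → Fin m → ℝ)
    (hx0 : x 0 = x0)
    (hx : ∀ t, x (t + 1) = A *ᵥ x t + B *ᵥ u t + w t)
    (hu : ∀ t, u t = -((((R + Bᵀ * P * B)⁻¹ * Bᵀ) *ᵥ (P *ᵥ (A *ᵥ x t) + ψ t - η t)))) :
    (∑ t ∈ Finset.range T, (x t ⬝ᵥ (Q *ᵥ x t) + u t ⬝ᵥ (R *ᵥ u t))) + x T ⬝ᵥ (P *ᵥ x T) =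
      ∑ t ∈ Finset.range T, (w t ⬝ᵥ (P *ᵥ w t)
          + 2 * (w t ⬝ᵥ ∑ i ∈ Finset.Ico 1 (T - t), ((Fᵀ) ^ i * P) *ᵥ w (t + i))
          - ψ t ⬝ᵥ (Hmat *ᵥ ψ t))
        + ∑ t ∈ Finset.range T, η t ⬝ᵥ (Hmat *ᵥ η t)
        + x0 ⬝ᵥ (P *ᵥ x0)
        + 2 * (x0 ⬝ᵥ ∑ i ∈ Finset.range T, ((Fᵀ) ^ (i + 1) * P) *ᵥ w i) := by
  set S : Matrix (Fin m) (Fin m) ℝ := R + Bᵀ * P * B with hSdef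
  have hPt : Pᵀ = P := hP.isHermitian.eq
  have hRt : Rᵀ = R := hR.isHermitian.eq
  have hQt : Qᵀ = Q := hQ.isHermitian.eq
  have hSpd : S.PosDef := by
    have h2 : (Bᵀ * P * B).PosSemidef := by
      have := hP.posSemidef.conjTranspose_mul_mul_same B
      simpa using this
    exact hR.add_posSemidef h2
  have hSt : Sᵀ = S := hSpd.isHermitian.eq
  have hdet : IsUnit S.det := isUnit_iff_ne_zero.2 (ne_of_gt hSpd.det_pos)
  have hSi : S * S⁻¹ = 1 := Matrix.mul_nonsing_inv S hdet
  have hiS : S⁻¹ * S = 1 := Matrix.nonsing_inv_mul S hdet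
  have hSit : (S⁻¹)ᵀ = S⁻¹ := by rw [Matrix.transpose_nonsing_inv, hSt]
  set G : Matrix (Fin m) (Fin n) ℝ := S⁻¹ * Bᵀ with hG
  set K : Matrix (Fin m) (Fin n) ℝ := S⁻¹ * (Bᵀ * P * A) with hK
  have hHt : Hmatᵀ = Hmat := by
    rw [hHmat]; simp [Matrix.transpose_mul, hSit, Matrix.mul_assoc]
  have hKt : Kᵀ = Aᵀ * P * B * S⁻¹ := by
    rw [hK]; simp [Matrix.transpose_mul, hSit, hPt, Matrix.mul_assoc]
  have hGt : Gᵀ = B * S⁻¹ := by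
    rw [hG]; simp [Matrix.transpose_mul, hSit]
  have hFt : Fᵀ = Aᵀ - Kᵀ * Bᵀ := by
    rw [hF, hK]; simp [Matrix.transpose_sub, Matrix.transpose_mul, Matrix.mul_assoc]
  -- matrix identities
  have hBPB : Bᵀ * P * B = S - R := by rw [hSdef]; abel
  have cSS : ∀ (q : ℕ) (X : Matrix (Fin m) (Fin q) ℝ), S * (S⁻¹ * X) = X := by
    intro q X; rw [← Matrix.mul_assoc, hSi, Matrix.one_mul]
  have cSiS : ∀ (q : ℕ) (X : Matrix (Fin m) (Fin q) ℝ), S⁻¹ * (S * X) = X := by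
    intro q X; rw [← Matrix.mul_assoc, hiS, Matrix.one_mul]
  have hBPB' : ∀ (q : ℕ) (X : Matrix (Fin m) (Fin q) ℝ),
      Bᵀ * (P * (B * X)) = S * X - R * X := by
    intro q X
    have h1 : Bᵀ * (P * (B * X)) = (Bᵀ * P * B) * X := by simp [Matrix.mul_assoc]
    rw [h1, hBPB, Matrix.sub_mul]
  have M1 : Q + Fᵀ * (P * F) + Kᵀ * (R * K) = P := by
    conv_rhs => rw [hDARE]
    rw [hFt, hF, hKt, hK]
    simp only [Matrix.mul_sub, Matrix.sub_mul, Matrix.mul_add, Matrix.add_mul,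
      Matrix.mul_assoc, hBPB', cSS, cSiS]
    abel
  have M2 : Kᵀ * (R * G) = Fᵀ * (P * Hmat) := by
    rw [hFt, hKt, hG, hHmat]
    simp only [Matrix.mul_sub, Matrix.sub_mul, Matrix.mul_add, Matrix.add_mul,
      Matrix.mul_assoc, hBPB', cSS, cSiS]
    abel
  have M3 : Gᵀ * (R * G) + Hmat * (P * Hmat) = Hmat := by
    rw [hGt, hG, hHmat]
    simp only [Matrix.mul_sub, Matrix.sub_mul, Matrix.mul_add, Matrix.add_mul,
      Matrix.mul_assoc, hBPB', cSS, cSiS]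
    abel
  set v : ℕ → Fin n → ℝ := fun t => ψ t - η t with hv
  have hu' : ∀ t, u t = -(K *ᵥ x t + G *ᵥ v t) := by
    intro t
    rw [hu t]
    congr 1
    have h1 : P *ᵥ (A *ᵥ x t) + ψ t - η t = (P * A) *ᵥ x t + v t := by
      rw [Matrix.mulVec_mulVec, hv, add_sub_assoc]
    rw [h1, Matrix.mulVec_add, Matrix.mulVec_mulVec, hG, hK]
    simp only [Matrix.mul_assoc]
  have hcl : ∀ t, x (t + 1) = F *ᵥ x t - Hmat *ᵥ v t + w t := by
    intro t
    rw [hx t, hu' t]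
    congr 1
    rw [hF, hHmat, Matrix.sub_mulVec, Matrix.mulVec_neg, Matrix.mulVec_add]
    rw [Matrix.mulVec_mulVec, Matrix.mulVec_mulVec, hK, hG]
    rw [← Matrix.mul_assoc, neg_add, Matrix.mul_assoc B (S⁻¹) Bᵀ]
    abel
  have hψT : ∀ t, T ≤ t → ψ t = 0 := by
    intro t ht
    rw [hψ t, Nat.sub_eq_zero_of_le ht]
    simp
  have hψrec : ∀ t, t < T → ψ t = P *ᵥ w t + Fᵀ *ᵥ ψ (t + 1) := by
    intro t ht
    rw [hψ t, hψ (t + 1), mulVec_sum']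
    have h1 : T - t = (T - (t + 1)) + 1 := by omega
    rw [h1, Finset.sum_range_succ']
    simp only [pow_zero, Matrix.one_mul, Nat.add_zero]
    rw [add_comm]
    congr 1
    apply Finset.sum_congr rfl
    intro i _
    have h2 : t + 1 + i = t + (i + 1) := by omega
    rw [Matrix.mulVec_mulVec, ← Matrix.mul_assoc, ← pow_succ', h2]
  have hIco : ∀ t, t < T →
      (∑ i ∈ Finset.Ico 1 (T - t), ((Fᵀ) ^ i * P) *ᵥ w (t + i)) = Fᵀ *ᵥ ψ (t + 1) := by
    intro t ht
    rw [hψ (t + 1), mulVec_sum', Finset.sum_Ico_eq_sum_range]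
    have h1 : T - t - 1 = T - (t + 1) := by omega
    rw [h1]
    apply Finset.sum_congr rfl
    intro i _
    have h2 : t + 1 + i = t + (1 + i) := by omega
    have h3 : 1 + i = i + 1 := by omega
    rw [Matrix.mulVec_mulVec, ← Matrix.mul_assoc, ← pow_succ', h2, h3]
  have hx0sum : (∑ i ∈ Finset.range T, ((Fᵀ) ^ (i + 1) * P) *ᵥ w i) = Fᵀ *ᵥ ψ 0 := by
    rw [hψ 0, mulVec_sum']
    apply Finset.sum_congr (by simp)
    intro i _
    rw [Matrix.mulVec_mulVec, ← Matrix.mul_assoc, ← pow_succ', Nat.zero_add]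
  set g : ℕ → ℝ := fun t => x t ⬝ᵥ (P *ᵥ x t) + 2 * (x t ⬝ᵥ (Fᵀ *ᵥ ψ t)) with hg
  have stage : ∀ t ∈ Finset.range T,
      x t ⬝ᵥ (Q *ᵥ x t) + u t ⬝ᵥ (R *ᵥ u t)
        = ((w t ⬝ᵥ (P *ᵥ w t)
            + 2 * (w t ⬝ᵥ ∑ i ∈ Finset.Ico 1 (T - t), ((Fᵀ) ^ i * P) *ᵥ w (t + i))
            - ψ t ⬝ᵥ (Hmat *ᵥ ψ t) + η t ⬝ᵥ (Hmat *ᵥ η t)) + (g t - g (t + 1))) := by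
    intro t ht'
    have ht : t < T := Finset.mem_range.mp ht'
    rw [hIco t ht]
    have hst : ψ t = P *ᵥ w t + Fᵀ *ᵥ ψ (t + 1) := hψrec t ht
    simp only [hg]
    rw [hu' t, hcl t]
    simp only [hv]
    rw [hst]
    set a := x t
    set c := w t
    set e := η t
    set p := ψ (t + 1)
    simp only [Matrix.mulVec_add, Matrix.mulVec_sub, Matrix.mulVec_neg, Matrix.mulVec_mulVec,
      dotProduct_add, dotProduct_sub, dotProduct_neg,
      neg_dotProduct, add_dotProduct, sub_dotProduct,
      dp_flipL, Matrix.transpose_mul, Matrix.transpose_transpose,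
      hPt, hRt, hQt, hSit, hHt, Matrix.mul_assoc]
    have fca : ∀ M : Matrix (Fin n) (Fin n) ℝ, c ⬝ᵥ (M *ᵥ a) = a ⬝ᵥ (Mᵀ *ᵥ c) := fun M => dp_flip M c a
    have fea : ∀ M : Matrix (Fin n) (Fin n) ℝ, e ⬝ᵥ (M *ᵥ a) = a ⬝ᵥ (Mᵀ *ᵥ e) := fun M => dp_flip M e a
    have fpa : ∀ M : Matrix (Fin n) (Fin n) ℝ, p ⬝ᵥ (M *ᵥ a) = a ⬝ᵥ (Mᵀ *ᵥ p) := fun M => dp_flip M p a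
    have fec : ∀ M : Matrix (Fin n) (Fin n) ℝ, e ⬝ᵥ (M *ᵥ c) = c ⬝ᵥ (Mᵀ *ᵥ e) := fun M => dp_flip M e c
    have fpc : ∀ M : Matrix (Fin n) (Fin n) ℝ, p ⬝ᵥ (M *ᵥ c) = c ⬝ᵥ (Mᵀ *ᵥ p) := fun M => dp_flip M p c
    have fpe : ∀ M : Matrix (Fin n) (Fin n) ℝ, p ⬝ᵥ (M *ᵥ e) = e ⬝ᵥ (Mᵀ *ᵥ p) := fun M => dp_flip M p e
    simp only [fca, fea, fpa, fec, fpc, fpe, Matrix.transpose_mul, Matrix.transpose_transpose,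
      hPt, hRt, hQt, hSit, hHt, Matrix.mul_assoc]
    have i1 : a ⬝ᵥ (Q *ᵥ a) + a ⬝ᵥ ((Fᵀ * (P * F)) *ᵥ a) + a ⬝ᵥ ((Kᵀ * (R * K)) *ᵥ a)
        = a ⬝ᵥ (P *ᵥ a) := by
      have := congrArg (fun M => a ⬝ᵥ (M *ᵥ a)) M1
      simpa [Matrix.add_mulVec, dotProduct_add] using this
    have i2c : a ⬝ᵥ ((Kᵀ * (R * (G * P))) *ᵥ c) = a ⬝ᵥ ((Fᵀ * (P * (Hmat * P))) *ᵥ c) := by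
      have := congrArg (fun M => a ⬝ᵥ ((M * P) *ᵥ c)) M2
      simpa [Matrix.mul_assoc] using this
    have i2p : a ⬝ᵥ ((Kᵀ * (R * (G * Fᵀ))) *ᵥ p) = a ⬝ᵥ ((Fᵀ * (P * (Hmat * Fᵀ))) *ᵥ p) := by
      have := congrArg (fun M => a ⬝ᵥ ((M * Fᵀ) *ᵥ p)) M2
      simpa [Matrix.mul_assoc] using this
    have i2e : a ⬝ᵥ ((Kᵀ * (R * G)) *ᵥ e) = a ⬝ᵥ ((Fᵀ * (P * Hmat)) *ᵥ e) := by
      have := congrArg (fun M => a ⬝ᵥ (M *ᵥ e)) M2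
      simpa using this
    have i3cc : c ⬝ᵥ ((P * (Gᵀ * (R * (G * P)))) *ᵥ c) + c ⬝ᵥ ((P * (Hmat * (P * (Hmat * P)))) *ᵥ c)
        = c ⬝ᵥ ((P * (Hmat * P)) *ᵥ c) := by
      have := congrArg (fun M => c ⬝ᵥ ((P * M * P) *ᵥ c)) M3
      simpa [Matrix.mul_add, Matrix.add_mul, Matrix.mul_assoc, Matrix.add_mulVec,
        dotProduct_add] using this
    have i3cp : c ⬝ᵥ ((P * (Gᵀ * (R * (G * Fᵀ)))) *ᵥ p) + c ⬝ᵥ ((P * (Hmat * (P * (Hmat * Fᵀ)))) *ᵥ p)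
        = c ⬝ᵥ ((P * (Hmat * Fᵀ)) *ᵥ p) := by
      have := congrArg (fun M => c ⬝ᵥ ((P * M * Fᵀ) *ᵥ p)) M3
      simpa [Matrix.mul_add, Matrix.add_mul, Matrix.mul_assoc, Matrix.add_mulVec,
        dotProduct_add] using this
    have i3ce : c ⬝ᵥ ((P * (Gᵀ * (R * G))) *ᵥ e) + c ⬝ᵥ ((P * (Hmat * (P * Hmat))) *ᵥ e)
        = c ⬝ᵥ ((P * Hmat) *ᵥ e) := by
      have := congrArg (fun M => c ⬝ᵥ ((P * M) *ᵥ e)) M3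
      simpa [Matrix.mul_add, Matrix.add_mul, Matrix.mul_assoc, Matrix.add_mulVec,
        dotProduct_add] using this
    have i3pp : p ⬝ᵥ ((F * (Gᵀ * (R * (G * Fᵀ)))) *ᵥ p) + p ⬝ᵥ ((F * (Hmat * (P * (Hmat * Fᵀ)))) *ᵥ p)
        = p ⬝ᵥ ((F * (Hmat * Fᵀ)) *ᵥ p) := by
      have := congrArg (fun M => p ⬝ᵥ ((F * M * Fᵀ) *ᵥ p)) M3
      simpa [Matrix.mul_add, Matrix.add_mul, Matrix.mul_assoc, Matrix.add_mulVec,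
        dotProduct_add] using this
    have i3ep : e ⬝ᵥ ((Gᵀ * (R * (G * Fᵀ))) *ᵥ p) + e ⬝ᵥ ((Hmat * (P * (Hmat * Fᵀ))) *ᵥ p)
        = e ⬝ᵥ ((Hmat * Fᵀ) *ᵥ p) := by
      have := congrArg (fun M => e ⬝ᵥ ((M * Fᵀ) *ᵥ p)) M3
      simpa [Matrix.mul_add, Matrix.add_mul, Matrix.mul_assoc, Matrix.add_mulVec,
        dotProduct_add] using this
    have i3ee : e ⬝ᵥ ((Gᵀ * (R * G)) *ᵥ e) + e ⬝ᵥ ((Hmat * (P * Hmat)) *ᵥ e)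
        = e ⬝ᵥ (Hmat *ᵥ e) := by
      have := congrArg (fun M => e ⬝ᵥ (M *ᵥ e)) M3
      simpa [Matrix.add_mulVec, dotProduct_add] using this
    linarith [i1, i2c, i2p, i2e, i3cc, i3cp, i3ce, i3pp, i3ep, i3ee]
  rw [Finset.sum_congr rfl stage, Finset.sum_add_distrib, Finset.sum_add_distrib,
    Finset.sum_range_sub']
  have hgT : g T = x T ⬝ᵥ (P *ᵥ x T) := by
    rw [hg]; simp [hψT T le_rfl]
  have hg0 : g 0 = x0 ⬝ᵥ (P *ᵥ x0) + 2 * (x0 ⬝ᵥ (Fᵀ *ᵥ ψ 0)) := by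
    rw [hg]; simp [hx0]
  rw [hgT, hg0, hx0sum]
  ring
end

section
/- Assume Q_f = P. Define u* in closed loop by u*_t = −(R + BᵀPB)⁻¹ Bᵀ (P A x*_t + ψ_t), with x* the trajectory generated by u* from x_0. Then u* is offline optimal: J(u) ≥ J(u*) for every u ∈ (ℝ^m)^T. Moreover J(u*) = Σ_{t=0}^{T−1}( w_tᵀ P w_t + 2 w_tᵀ Σ_{i=1}^{T−t−1} (Fᵀ)^i P w_{t+i} − ψ_tᵀ H ψ_t ) + x_0ᵀ P x_0 + 2 x_0ᵀ Σ_{i=0}^{T−1} (Fᵀ)^{i+1} P w_i, and for any η_0,…,η_{T−1} ∈ ℝ^n, the closed-loop control u^η with u^η_t = −(R + BᵀPB)⁻¹ Bᵀ (P A x_t + ψ_t − η_t) satisfies J(u^η) − J(u*) = Σ_{t=0}^{T−1} η_tᵀ H η_t. -/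
open Matrix

lemma dp_flip_s3 {a b : ℕ} (M : Matrix (Fin a) (Fin b) ℝ) (x : Fin a → ℝ) (y : Fin b → ℝ) :
    x ⬝ᵥ (M *ᵥ y) = y ⬝ᵥ (Mᵀ *ᵥ x) := by
  rw [dotProduct_mulVec, ← mulVec_transpose, dotProduct_comm]

lemma dp_lmul {a b : ℕ} (M : Matrix (Fin a) (Fin b) ℝ) (x : Fin b → ℝ) (y : Fin a → ℝ) :
    (M *ᵥ x) ⬝ᵥ y = x ⬝ᵥ (Mᵀ *ᵥ y) := by
  rw [dotProduct_comm, dp_flip_s3]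

lemma keyStep {n m : ℕ}
    (A P Q F H : Matrix (Fin n) (Fin n) ℝ) (B : Matrix (Fin n) (Fin m) ℝ)
    (R S : Matrix (Fin m) (Fin m) ℝ) (K G : Matrix (Fin m) (Fin n) ℝ)
    (hPs : Pᵀ = P) (hSs : Sᵀ = S)
    (hSdef : S = R + Bᵀ * P * B)
    (hKdef : K = S⁻¹ * Bᵀ * (P * A))
    (hGdef : G = S⁻¹ * Bᵀ)
    (hFdef : F = A - B * K)
    (hHdef : H = B * G)
    (hSiS : S⁻¹ * S = 1) (hSSi : S * S⁻¹ = 1)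
    (hQdef : Q = P + Aᵀ * P * B * S⁻¹ * (Bᵀ * P * A) - Aᵀ * P * A)
    (x w p' : Fin n → ℝ) (u : Fin m → ℝ) :
    x ⬝ᵥ (Q *ᵥ x) + u ⬝ᵥ (R *ᵥ u)
      + ((A *ᵥ x + B *ᵥ u + w) ⬝ᵥ (P *ᵥ (A *ᵥ x + B *ᵥ u + w))
         + 2 * ((A *ᵥ x + B *ᵥ u + w) ⬝ᵥ (Fᵀ *ᵥ p')))
      - (x ⬝ᵥ (P *ᵥ x) + 2 * (x ⬝ᵥ (Fᵀ *ᵥ (P *ᵥ w + Fᵀ *ᵥ p'))))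
    = (u + K *ᵥ x + G *ᵥ (P *ᵥ w + Fᵀ *ᵥ p')) ⬝ᵥ (S *ᵥ (u + K *ᵥ x + G *ᵥ (P *ᵥ w + Fᵀ *ᵥ p')))
      + (w ⬝ᵥ (P *ᵥ w) + 2 * (w ⬝ᵥ (Fᵀ *ᵥ p'))
         - (P *ᵥ w + Fᵀ *ᵥ p') ⬝ᵥ (H *ᵥ (P *ᵥ w + Fᵀ *ᵥ p'))) := by
  subst hGdef hKdef hFdef hHdef
  have hSiT : (S⁻¹)ᵀ = S⁻¹ := (Matrix.transpose_nonsing_inv S).trans (congrArg Inv.inv hSs)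
  have hc1 : ∀ (X : Matrix (Fin n) (Fin m) ℝ), X * S⁻¹ * S = X := by
    intro X; rw [Matrix.mul_assoc, hSiS, Matrix.mul_one]
  have hc2 : ∀ (X : Matrix (Fin m) (Fin m) ℝ), X * S⁻¹ * S = X := by
    intro X; rw [Matrix.mul_assoc, hSiS, Matrix.mul_one]
  have hc3 : ∀ (X : Matrix (Fin n) (Fin m) ℝ), X * S * S⁻¹ = X := by
    intro X; rw [Matrix.mul_assoc, hSSi, Matrix.mul_one]
  have hc4 : ∀ (X : Matrix (Fin m) (Fin m) ℝ), X * S * S⁻¹ = X := by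
    intro X; rw [Matrix.mul_assoc, hSSi, Matrix.mul_one]
  simp only [hQdef, mulVec_add, dotProduct_add, add_dotProduct, mulVec_mulVec, dp_lmul,
    transpose_mul, transpose_transpose, transpose_sub, hPs, hSs, hSiT,
    sub_mulVec, add_mulVec, mulVec_sub, dotProduct_sub, sub_dotProduct, Matrix.sub_mul,
    Matrix.mul_sub, Matrix.add_mul, Matrix.mul_add, ← Matrix.mul_assoc, hSiS, hSSi,
    hc1, hc2, hc3, hc4, Matrix.one_mul, Matrix.mul_one]
  have g1 : x ⬝ᵥ ((Aᵀ * P) *ᵥ w) = w ⬝ᵥ ((P * A) *ᵥ x) := by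
    rw [dp_flip_s3]; congr 2; simp [transpose_mul, hPs, Matrix.mul_assoc]
  have g2 : u ⬝ᵥ (S *ᵥ u) = u ⬝ᵥ (R *ᵥ u) + u ⬝ᵥ ((Bᵀ * P * B) *ᵥ u) := by
    rw [hSdef, add_mulVec, dotProduct_add]
  have g3 : u ⬝ᵥ ((Bᵀ * Aᵀ) *ᵥ p') = p' ⬝ᵥ ((A * B) *ᵥ u) := by
    rw [dp_flip_s3]; congr 2; simp [transpose_mul, Matrix.mul_assoc]
  have g4 : u ⬝ᵥ ((Bᵀ * Aᵀ * P * B * S⁻¹ * Bᵀ) *ᵥ p') = p' ⬝ᵥ ((B * S⁻¹ * Bᵀ * P * A * B) *ᵥ u) := by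
    rw [dp_flip_s3]; congr 2; simp [transpose_mul, hPs, hSiT, Matrix.mul_assoc]
  have g5 : x ⬝ᵥ ((Aᵀ * P * B * S⁻¹ * Bᵀ * P) *ᵥ w) = w ⬝ᵥ ((P * B * S⁻¹ * Bᵀ * P * A) *ᵥ x) := by
    rw [dp_flip_s3]; congr 2; simp [transpose_mul, hPs, hSiT, Matrix.mul_assoc]
  have g6 : x ⬝ᵥ ((Aᵀ * P * B * S⁻¹ * Bᵀ * Aᵀ) *ᵥ p') = p' ⬝ᵥ ((A * B * S⁻¹ * Bᵀ * P * A) *ᵥ x) := by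
    rw [dp_flip_s3]; congr 2; simp [transpose_mul, hPs, hSiT, Matrix.mul_assoc]
  have g7 : x ⬝ᵥ ((Aᵀ * P * B * S⁻¹ * Bᵀ * Aᵀ * P * B * S⁻¹ * Bᵀ) *ᵥ p')
      = p' ⬝ᵥ ((B * S⁻¹ * Bᵀ * P * A * B * S⁻¹ * Bᵀ * P * A) *ᵥ x) := by
    rw [dp_flip_s3]; congr 2; simp [transpose_mul, hPs, hSiT, Matrix.mul_assoc]
  linear_combination (-1 : ℝ) * g1 - g2 + g3 - g4 + g5 + g6 - g7

theorem stmt3 (n m T : ℕ)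
    (A : Matrix (Fin n) (Fin n) ℝ) (B : Matrix (Fin n) (Fin m) ℝ)
    (Q : Matrix (Fin n) (Fin n) ℝ) (R : Matrix (Fin m) (Fin m) ℝ)
    (P : Matrix (Fin n) (Fin n) ℝ)
    (hQ : Q.PosSemidef) (hR : R.PosDef) (hP : P.PosDef)
    (hDARE : P = Q + Aᵀ * P * A - Aᵀ * P * B * (R + Bᵀ * P * B)⁻¹ * (Bᵀ * P * A))
    (F : Matrix (Fin n) (Fin n) ℝ)
    (hF : F = A - B * ((R + Bᵀ * P * B)⁻¹ * (Bᵀ * P * A)))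
    (Hmat : Matrix (Fin n) (Fin n) ℝ)
    (hHmat : Hmat = B * (R + Bᵀ * P * B)⁻¹ * Bᵀ)
    (x0 : Fin n → ℝ) (w : ℕ → Fin n → ℝ)
    (ψ : ℕ → Fin n → ℝ)
    (hψ : ∀ t, ψ t = ∑ i ∈ Finset.range (T - t), ((Fᵀ) ^ i * P) *ᵥ w (t + i))
    (xs : ℕ → Fin n → ℝ) (us : ℕ → Fin m → ℝ)
    (hxs0 : xs 0 = x0)
    (hxs : ∀ t, xs (t + 1) = A *ᵥ xs t + B *ᵥ us t + w t)
    (hus : ∀ t, us t = -((((R + Bᵀ * P * B)⁻¹ * Bᵀ) *ᵥ (P *ᵥ (A *ᵥ xs t) + ψ t)))) :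
    (∀ v : ℕ → Fin m → ℝ, trajCost A B Q R P x0 w T us ≤ trajCost A B Q R P x0 w T v) ∧
    trajCost A B Q R P x0 w T us =
      ∑ t ∈ Finset.range T, (w t ⬝ᵥ (P *ᵥ w t)
          + 2 * (w t ⬝ᵥ ∑ i ∈ Finset.Ico 1 (T - t), ((Fᵀ) ^ i * P) *ᵥ w (t + i))
          - ψ t ⬝ᵥ (Hmat *ᵥ ψ t))
        + x0 ⬝ᵥ (P *ᵥ x0)
        + 2 * (x0 ⬝ᵥ ∑ i ∈ Finset.range T, ((Fᵀ) ^ (i + 1) * P) *ᵥ w i) ∧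
    ∀ (η : ℕ → Fin n → ℝ) (x : ℕ → Fin n → ℝ) (u : ℕ → Fin m → ℝ),
      x 0 = x0 → (∀ t, x (t + 1) = A *ᵥ x t + B *ᵥ u t + w t) →
      (∀ t, u t = -((((R + Bᵀ * P * B)⁻¹ * Bᵀ) *ᵥ (P *ᵥ (A *ᵥ x t) + ψ t - η t)))) →
      trajCost A B Q R P x0 w T u - trajCost A B Q R P x0 w T us =
        ∑ t ∈ Finset.range T, η t ⬝ᵥ (Hmat *ᵥ η t) := by
  set S : Matrix (Fin m) (Fin m) ℝ := R + Bᵀ * P * B with hSdef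
  set G : Matrix (Fin m) (Fin n) ℝ := S⁻¹ * Bᵀ with hGdef
  set K : Matrix (Fin m) (Fin n) ℝ := G * (P * A) with hKdef
  have hKdef' : K = S⁻¹ * Bᵀ * (P * A) := by rw [hKdef, hGdef]
  -- symmetry and invertibility facts
  have hPs : Pᵀ = P := by
    have := hP.1
    rwa [Matrix.IsHermitian, Matrix.conjTranspose_eq_transpose_of_trivial] at this
  have hBPB : (Bᵀ * P * B).PosSemidef := by simpa using hP.posSemidef.conjTranspose_mul_mul_same B
  have hSpos : S.PosDef := by rw [hSdef]; exact hR.add_posSemidef hBPB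
  have hSs : Sᵀ = S := by
    have := hSpos.1
    rwa [Matrix.IsHermitian, Matrix.conjTranspose_eq_transpose_of_trivial] at this
  have hSdet : IsUnit S.det := isUnit_iff_ne_zero.mpr hSpos.det_pos.ne'
  have hSSi : S * S⁻¹ = 1 := Matrix.mul_nonsing_inv S hSdet
  have hSiS : S⁻¹ * S = 1 := Matrix.nonsing_inv_mul S hSdet
  have hSiT : (S⁻¹)ᵀ = S⁻¹ := (Matrix.transpose_nonsing_inv S).trans (congrArg Inv.inv hSs)
  have hQdef : Q = P + Aᵀ * P * B * S⁻¹ * (Bᵀ * P * A) - Aᵀ * P * A := by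
    have key : ∀ (p q y z : Matrix (Fin n) (Fin n) ℝ), p = q + y - z → q = p + z - y := by
      intro p q y z h; rw [h]; abel
    exact key _ _ _ _ hDARE
  have hFd : F = A - B * K := by
    rw [hF, hKdef']; congr 1; simp [Matrix.mul_assoc]
  have hHd : Hmat = B * G := by rw [hHmat, hGdef, Matrix.mul_assoc]
  -- psi facts
  have hψT : ψ T = 0 := by simp [hψ]
  have hrec : ∀ t, t < T → ψ t = P *ᵥ w t + Fᵀ *ᵥ ψ (t + 1) := by
    intro t ht
    rw [hψ t, hψ (t + 1)]
    rw [show T - t = (T - (t + 1)) + 1 from by omega, Finset.sum_range_succ']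
    rw [add_comm]
    congr 1
    · simp
    · rw [← mulVecLin_apply, map_sum]
      refine Finset.sum_congr rfl fun i _ => ?_
      rw [mulVecLin_apply, mulVec_mulVec, ← Matrix.mul_assoc, ← pow_succ']
      rw [show t + 1 + i = t + (i + 1) from by omega]
  have hψ1 : ∀ t, Fᵀ *ᵥ ψ (t + 1) = ∑ i ∈ Finset.Ico 1 (T - t), ((Fᵀ) ^ i * P) *ᵥ w (t + i) := by
    intro t
    rw [hψ (t + 1), Finset.sum_Ico_eq_sum_range]
    rw [show T - t - 1 = T - (t + 1) from by omega]
    rw [← mulVecLin_apply, map_sum]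
    refine Finset.sum_congr rfl fun i _ => ?_
    rw [mulVecLin_apply, mulVec_mulVec, ← Matrix.mul_assoc, ← pow_succ']
    rw [show i + 1 = 1 + i from by omega, show t + 1 + i = t + (1 + i) from by omega]
  have hψ0 : Fᵀ *ᵥ ψ 0 = ∑ i ∈ Finset.range T, ((Fᵀ) ^ (i + 1) * P) *ᵥ w i := by
    rw [hψ 0, ← mulVecLin_apply, map_sum]
    rw [show T - 0 = T from by omega]
    refine Finset.sum_congr rfl fun i _ => ?_
    rw [mulVecLin_apply, mulVec_mulVec, ← Matrix.mul_assoc, ← pow_succ']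
    rw [show (0 : ℕ) + i = i from by omega]
  -- the master cost expansion
  set CC : ℝ := (∑ t ∈ Finset.range T,
      (w t ⬝ᵥ (P *ᵥ w t) + 2 * (w t ⬝ᵥ (Fᵀ *ᵥ ψ (t + 1))) - ψ t ⬝ᵥ (Hmat *ᵥ ψ t)))
    + (x0 ⬝ᵥ (P *ᵥ x0) + 2 * (x0 ⬝ᵥ (Fᵀ *ᵥ ψ 0))) with hCC
  have costEq : ∀ u : ℕ → Fin m → ℝ,
      trajCost A B Q R P x0 w T u
        = (∑ t ∈ Finset.range T,
            (u t + K *ᵥ seqState A B x0 u w t + G *ᵥ ψ t) ⬝ᵥ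
              (S *ᵥ (u t + K *ᵥ seqState A B x0 u w t + G *ᵥ ψ t))) + CC := by
    intro u
    unfold trajCost
    set X : ℕ → Fin n → ℝ := seqState A B x0 u w with hX
    have hX0 : X 0 = x0 := rfl
    have hXs : ∀ t, X (t + 1) = A *ᵥ X t + B *ᵥ u t + w t := fun t => rfl
    set V : ℕ → ℝ := fun t => X t ⬝ᵥ (P *ᵥ X t) + 2 * (X t ⬝ᵥ (Fᵀ *ᵥ ψ t)) with hV
    have tele : ∑ t ∈ Finset.range T, (V (t + 1) - V t) = V T - V 0 :=
      Finset.sum_range_sub V T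
    have hstep : ∀ t ∈ Finset.range T,
        (X t ⬝ᵥ (Q *ᵥ X t) + u t ⬝ᵥ (R *ᵥ u t)) + (V (t + 1) - V t)
        = (u t + K *ᵥ X t + G *ᵥ ψ t) ⬝ᵥ (S *ᵥ (u t + K *ᵥ X t + G *ᵥ ψ t))
          + (w t ⬝ᵥ (P *ᵥ w t) + 2 * (w t ⬝ᵥ (Fᵀ *ᵥ ψ (t + 1))) - ψ t ⬝ᵥ (Hmat *ᵥ ψ t)) := by
      intro t ht
      have hlt := Finset.mem_range.mp ht
      have hr := hrec t hlt
      have hkey := keyStep A P Q F Hmat B R S K G hPs hSs hSdef hKdef' hGdef hFd hHd hSiS hSSi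
        hQdef (X t) (w t) (ψ (t + 1)) (u t)
      rw [← hr] at hkey
      simp only [hV]
      rw [hXs t]
      linarith [hkey]
    have sum2 : ∑ t ∈ Finset.range T,
        ((X t ⬝ᵥ (Q *ᵥ X t) + u t ⬝ᵥ (R *ᵥ u t)) + (V (t + 1) - V t))
        = (∑ t ∈ Finset.range T,
            (u t + K *ᵥ X t + G *ᵥ ψ t) ⬝ᵥ (S *ᵥ (u t + K *ᵥ X t + G *ᵥ ψ t)))
          + ∑ t ∈ Finset.range T,
            (w t ⬝ᵥ (P *ᵥ w t) + 2 * (w t ⬝ᵥ (Fᵀ *ᵥ ψ (t + 1))) - ψ t ⬝ᵥ (Hmat *ᵥ ψ t)) := by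
      rw [← Finset.sum_add_distrib]; exact Finset.sum_congr rfl hstep
    have sum1 : ∑ t ∈ Finset.range T,
        ((X t ⬝ᵥ (Q *ᵥ X t) + u t ⬝ᵥ (R *ᵥ u t)) + (V (t + 1) - V t))
        = (∑ t ∈ Finset.range T, (X t ⬝ᵥ (Q *ᵥ X t) + u t ⬝ᵥ (R *ᵥ u t))) + (V T - V 0) := by
      rw [Finset.sum_add_distrib, tele]
    have hVT : V T = X T ⬝ᵥ (P *ᵥ X T) := by simp only [hV]; rw [hψT]; simp
    have hV0 : V 0 = x0 ⬝ᵥ (P *ᵥ x0) + 2 * (x0 ⬝ᵥ (Fᵀ *ᵥ ψ 0)) := by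
      simp only [hV]; rw [hX0]
    rw [hCC]
    linarith [sum1, sum2, hVT, hV0]
  -- trajectory identification
  have hxsEq : ∀ t, xs t = seqState A B x0 us w t := by
    intro t
    induction t with
    | zero => exact hxs0
    | succ t ih => rw [hxs t, ih]; rfl
  have husZero : ∀ t, us t + K *ᵥ seqState A B x0 us w t + G *ᵥ ψ t = 0 := by
    intro t
    rw [← hxsEq t, hus t]
    have hGK : G *ᵥ (P *ᵥ (A *ᵥ xs t) + ψ t) = K *ᵥ xs t + G *ᵥ ψ t := by
      rw [mulVec_add]
      congr 1
      rw [mulVec_mulVec, mulVec_mulVec, hKdef, Matrix.mul_assoc]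
    rw [hGK]
    abel
  have Jus : trajCost A B Q R P x0 w T us = CC := by
    rw [costEq us]
    have hz : ∀ t ∈ Finset.range T,
        (us t + K *ᵥ seqState A B x0 us w t + G *ᵥ ψ t) ⬝ᵥ
          (S *ᵥ (us t + K *ᵥ seqState A B x0 us w t + G *ᵥ ψ t)) = (0 : ℝ) := by
      intro t _
      rw [husZero t]
      simp
    rw [Finset.sum_congr rfl hz]
    simp
  refine ⟨?_, ?_, ?_⟩
  · intro v
    rw [Jus, costEq v]
    have h0 : (0 : ℝ) ≤ ∑ t ∈ Finset.range T,
        (v t + K *ᵥ seqState A B x0 v w t + G *ᵥ ψ t) ⬝ᵥ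
          (S *ᵥ (v t + K *ᵥ seqState A B x0 v w t + G *ᵥ ψ t)) :=
      Finset.sum_nonneg fun t _ => by simpa only [star_trivial] using hSpos.posSemidef.dotProduct_mulVec_nonneg (v t + K *ᵥ seqState A B x0 v w t + G *ᵥ ψ t)
    linarith
  · rw [Jus, hCC]
    have h1 : ∑ t ∈ Finset.range T,
        (w t ⬝ᵥ (P *ᵥ w t) + 2 * (w t ⬝ᵥ (Fᵀ *ᵥ ψ (t + 1))) - ψ t ⬝ᵥ (Hmat *ᵥ ψ t))
        = ∑ t ∈ Finset.range T, (w t ⬝ᵥ (P *ᵥ w t)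
            + 2 * (w t ⬝ᵥ ∑ i ∈ Finset.Ico 1 (T - t), ((Fᵀ) ^ i * P) *ᵥ w (t + i))
            - ψ t ⬝ᵥ (Hmat *ᵥ ψ t)) :=
      Finset.sum_congr rfl fun t _ => by rw [hψ1 t]
    rw [h1, ← hψ0]
    ring
  · intro η x u hx0 hxr hur
    have hxEq : ∀ t, x t = seqState A B x0 u w t := by
      intro t
      induction t with
      | zero => exact hx0
      | succ t ih => rw [hxr t, ih]; rfl
    have hsη : ∀ t, u t + K *ᵥ seqState A B x0 u w t + G *ᵥ ψ t = G *ᵥ η t := by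
      intro t
      rw [← hxEq t, hur t]
      have hGK : G *ᵥ (P *ᵥ (A *ᵥ x t) + ψ t - η t)
          = K *ᵥ x t + G *ᵥ ψ t - G *ᵥ η t := by
        rw [mulVec_sub, mulVec_add]
        congr 2
        rw [mulVec_mulVec, mulVec_mulVec, hKdef, Matrix.mul_assoc]
      rw [hGK]
      abel
    have hquad : ∀ t, (G *ᵥ η t) ⬝ᵥ (S *ᵥ (G *ᵥ η t)) = η t ⬝ᵥ (Hmat *ᵥ η t) := by
      intro t
      rw [mulVec_mulVec, dp_lmul, mulVec_mulVec]
      have e1 : S * G = Bᵀ := by rw [hGdef, ← Matrix.mul_assoc, hSSi, Matrix.one_mul]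
      have e2 : Gᵀ * (S * G) = Hmat := by
        rw [e1, hGdef, transpose_mul, hSiT, transpose_transpose, hHmat]
      rw [e2]
    rw [costEq u, Jus]
    have h2 : ∑ t ∈ Finset.range T,
        (u t + K *ᵥ seqState A B x0 u w t + G *ᵥ ψ t) ⬝ᵥ
          (S *ᵥ (u t + K *ᵥ seqState A B x0 u w t + G *ᵥ ψ t))
        = ∑ t ∈ Finset.range T, η t ⬝ᵥ (Hmat *ᵥ η t) :=
      Finset.sum_congr rfl fun t _ => by rw [hsη t, hquad t]
    rw [h2]
    ring
end

section
/- Assume Q_f = P and let OPT = inf_{u ∈ (ℝ^m)^T} J(u). Then OPT = Σ_{t=0}^{T−1} ψ_tᵀ (P⁻¹ − F P⁻¹ Fᵀ − H) ψ_t + (Fᵀ ψ_0 + P x_0)ᵀ P⁻¹ (Fᵀ ψ_0 + P x_0); in particular, OPT ≥ λ_min(P⁻¹ − F P⁻¹ Fᵀ − H) · Σ_{t=0}^{T−1} ‖ψ_t‖², where λ_min denotes the smallest eigenvalue of the symmetric matrix P⁻¹ − F P⁻¹ Fᵀ − H. -/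
open Matrix

/-! Auxiliary lemmas -/

lemma dv1 {n m : ℕ} (M : Matrix (Fin n) (Fin m) ℝ) (a : Fin n → ℝ) (b : Fin m → ℝ) :
    (Mᵀ *ᵥ a) ⬝ᵥ b = a ⬝ᵥ (M *ᵥ b) := by
  rw [Matrix.dotProduct_mulVec, ← Matrix.mulVec_transpose]

lemma dv_symm {n m : ℕ} (M : Matrix (Fin n) (Fin m) ℝ) (a : Fin n → ℝ) (b : Fin m → ℝ) :
    a ⬝ᵥ (M *ᵥ b) = b ⬝ᵥ (Mᵀ *ᵥ a) := by
  rw [← dv1, dotProduct_comm]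

lemma mulVec_sumv {n m : ℕ} (M : Matrix (Fin n) (Fin m) ℝ) (s : Finset ℕ)
    (f : ℕ → Fin m → ℝ) : M *ᵥ (∑ i ∈ s, f i) = ∑ i ∈ s, M *ᵥ f i := by
  rw [← Matrix.mulVecLin_apply, map_sum]
  simp [Matrix.mulVecLin_apply]

lemma complete_square {m : ℕ} (S : Matrix (Fin m) (Fin m) ℝ) (hS : Sᵀ = S)
    (h1 : S * S⁻¹ = 1) (h2 : S⁻¹ * S = 1) (u b : Fin m → ℝ) :
    (u + S⁻¹ *ᵥ b) ⬝ᵥ (S *ᵥ (u + S⁻¹ *ᵥ b)) =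
      u ⬝ᵥ (S *ᵥ u) + 2 * (b ⬝ᵥ u) + b ⬝ᵥ (S⁻¹ *ᵥ b) := by
  have hinv : (S⁻¹)ᵀ = S⁻¹ := by rw [Matrix.transpose_nonsing_inv, hS]
  simp only [Matrix.mulVec_add, dotProduct_add, add_dotProduct, Matrix.mulVec_mulVec, h1,
    Matrix.one_mulVec]
  have e1 : u ⬝ᵥ b = b ⬝ᵥ u := dotProduct_comm _ _
  have e2 : (S⁻¹ *ᵥ b) ⬝ᵥ (S *ᵥ u) = b ⬝ᵥ u := by
    rw [← hinv, dv1, Matrix.mulVec_mulVec, h2, Matrix.one_mulVec]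
  have e3 : (S⁻¹ *ᵥ b) ⬝ᵥ b = b ⬝ᵥ (S⁻¹ *ᵥ b) := dotProduct_comm _ _
  rw [e1, e2, e3]; ring

lemma step_id {n m : ℕ}
    (A Pm Qm : Matrix (Fin n) (Fin n) ℝ) (B : Matrix (Fin n) (Fin m) ℝ)
    (R S : Matrix (Fin m) (Fin m) ℝ)
    (hPs : Pmᵀ = Pm) (hSs : Sᵀ = S) (h1 : S * S⁻¹ = 1) (h2 : S⁻¹ * S = 1)
    (hQ : Qm = Pm - Aᵀ * Pm * A + Aᵀ * Pm * B * S⁻¹ * (Bᵀ * Pm * A))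
    (hR : R = S - Bᵀ * Pm * B)
    (F H : Matrix (Fin n) (Fin n) ℝ)
    (hF : F = A - B * (S⁻¹ * (Bᵀ * Pm * A)))
    (hH : H = B * S⁻¹ * Bᵀ)
    (x : Fin n → ℝ) (u : Fin m → ℝ) (w p' p : Fin n → ℝ)
    (hp : p = Pm *ᵥ w + Fᵀ *ᵥ p') :
    x ⬝ᵥ (Qm *ᵥ x) + u ⬝ᵥ (R *ᵥ u)
      + (A *ᵥ x + B *ᵥ u + w) ⬝ᵥ (Pm *ᵥ (A *ᵥ x + B *ᵥ u + w))
      + 2 * ((Fᵀ *ᵥ p') ⬝ᵥ (A *ᵥ x + B *ᵥ u + w))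
    = x ⬝ᵥ (Pm *ᵥ x) + 2 * ((Fᵀ *ᵥ p) ⬝ᵥ x)
      + (w ⬝ᵥ (Pm *ᵥ w) + 2 * ((Fᵀ *ᵥ p') ⬝ᵥ w) - p ⬝ᵥ (H *ᵥ p))
      + (u + S⁻¹ *ᵥ (Bᵀ *ᵥ (Pm *ᵥ (A *ᵥ x) + p))) ⬝ᵥ
          (S *ᵥ (u + S⁻¹ *ᵥ (Bᵀ *ᵥ (Pm *ᵥ (A *ᵥ x) + p)))) := by
  have hinv : (S⁻¹)ᵀ = S⁻¹ := by rw [Matrix.transpose_nonsing_inv, hSs]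
  have mv_dv : ∀ (k l : ℕ) (M : Matrix (Fin k) (Fin l) ℝ) (a : Fin l → ℝ) (b : Fin k → ℝ),
      (M *ᵥ a) ⬝ᵥ b = a ⬝ᵥ (Mᵀ *ᵥ b) := by
    intro k l M a b; rw [← dv1, Matrix.transpose_transpose]
  have dux : ∀ M : Matrix (Fin m) (Fin n) ℝ, u ⬝ᵥ (M *ᵥ x) = x ⬝ᵥ (Mᵀ *ᵥ u) :=
    fun M => dv_symm M u x
  have dwx : ∀ M : Matrix (Fin n) (Fin n) ℝ, w ⬝ᵥ (M *ᵥ x) = x ⬝ᵥ (Mᵀ *ᵥ w) :=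
    fun M => dv_symm M w x
  have dpx : ∀ M : Matrix (Fin n) (Fin n) ℝ, p' ⬝ᵥ (M *ᵥ x) = x ⬝ᵥ (Mᵀ *ᵥ p') :=
    fun M => dv_symm M p' x
  have dwu : ∀ M : Matrix (Fin n) (Fin m) ℝ, w ⬝ᵥ (M *ᵥ u) = u ⬝ᵥ (Mᵀ *ᵥ w) :=
    fun M => dv_symm M w u
  have dpu : ∀ M : Matrix (Fin n) (Fin m) ℝ, p' ⬝ᵥ (M *ᵥ u) = u ⬝ᵥ (Mᵀ *ᵥ p') :=
    fun M => dv_symm M p' u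
  have dpw : ∀ M : Matrix (Fin n) (Fin n) ℝ, p' ⬝ᵥ (M *ᵥ w) = w ⬝ᵥ (Mᵀ *ᵥ p') :=
    fun M => dv_symm M p' w
  have hc1 : ∀ X : Matrix (Fin m) (Fin n) ℝ, S⁻¹ * (S * X) = X := by
    intro X; rw [← Matrix.mul_assoc, h2, Matrix.one_mul]
  have hc2 : ∀ X : Matrix (Fin m) (Fin n) ℝ, S * (S⁻¹ * X) = X := by
    intro X; rw [← Matrix.mul_assoc, h1, Matrix.one_mul]
  rw [complete_square S hSs h1 h2]
  subst hQ hR hF hH hp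
  simp only [Matrix.mulVec_add, Matrix.add_mulVec, Matrix.sub_mulVec, Matrix.mulVec_sub,
    dotProduct_add, add_dotProduct, dotProduct_sub, sub_dotProduct, Matrix.mulVec_mulVec,
    Matrix.transpose_sub, Matrix.transpose_mul, Matrix.transpose_transpose, hPs, hSs, hinv,
    Matrix.mul_assoc, hc1, hc2, h1, h2]
  simp only [mv_dv]
  simp only [Matrix.transpose_sub, Matrix.transpose_mul, Matrix.transpose_transpose, hPs, hSs,
    hinv, Matrix.mulVec_mulVec, Matrix.mul_assoc, hc1, hc2, h1, h2]
  simp only [dux, dwx, dpx, dwu, dpu, dpw]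
  simp only [Matrix.transpose_sub, Matrix.transpose_mul, Matrix.transpose_transpose, hPs, hSs,
    hinv, Matrix.mulVec_mulVec, Matrix.sub_mul, Matrix.mul_sub, Matrix.sub_mulVec,
    Matrix.mulVec_sub, dotProduct_sub, sub_dotProduct, Matrix.mul_assoc, hc1, hc2, h1, h2]
  ring

lemma Pinv_expand {n : ℕ} (P F : Matrix (Fin n) (Fin n) ℝ)
    (hPs : Pᵀ = P) (hp1 : P * P⁻¹ = 1) (hp2 : P⁻¹ * P = 1) (w p' : Fin n → ℝ) :
    (P *ᵥ w + Fᵀ *ᵥ p') ⬝ᵥ (P⁻¹ *ᵥ (P *ᵥ w + Fᵀ *ᵥ p'))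
      = w ⬝ᵥ (P *ᵥ w) + 2 * ((Fᵀ *ᵥ p') ⬝ᵥ w) + p' ⬝ᵥ ((F * (P⁻¹ * Fᵀ)) *ᵥ p') := by
  have hinv : (P⁻¹)ᵀ = P⁻¹ := by rw [Matrix.transpose_nonsing_inv, hPs]
  have mv_dv : ∀ (M : Matrix (Fin n) (Fin n) ℝ) (a b : Fin n → ℝ),
      (M *ᵥ a) ⬝ᵥ b = a ⬝ᵥ (Mᵀ *ᵥ b) := by
    intro M a b; rw [← dv1, Matrix.transpose_transpose]
  have hc1 : ∀ X : Matrix (Fin n) (Fin n) ℝ, P⁻¹ * (P * X) = X := by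
    intro X; rw [← Matrix.mul_assoc, hp2, Matrix.one_mul]
  have hc2 : ∀ X : Matrix (Fin n) (Fin n) ℝ, P * (P⁻¹ * X) = X := by
    intro X; rw [← Matrix.mul_assoc, hp1, Matrix.one_mul]
  have dpw : ∀ M : Matrix (Fin n) (Fin n) ℝ, p' ⬝ᵥ (M *ᵥ w) = w ⬝ᵥ (Mᵀ *ᵥ p') :=
    fun M => dv_symm M p' w
  simp only [Matrix.mulVec_add, dotProduct_add, add_dotProduct, Matrix.mulVec_mulVec]
  simp only [mv_dv]
  simp only [Matrix.transpose_mul, Matrix.transpose_transpose, hPs, hinv,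
    Matrix.mulVec_mulVec, Matrix.mul_assoc, hc1, hc2, hp1, hp2]
  simp only [dpw]
  simp only [Matrix.transpose_mul, Matrix.transpose_transpose, hPs, hinv,
    Matrix.mulVec_mulVec, Matrix.mul_assoc, hc1, hc2, hp1, hp2, Matrix.mul_one,
    Matrix.one_mulVec]
  ring

lemma lambdaMin_mul_le {n : ℕ} (M : Matrix (Fin n) (Fin n) ℝ) (x : Fin n → ℝ) :
    lambdaMin M * evNorm x ^ 2 ≤ x ⬝ᵥ (M *ᵥ x) := by
  have hbdd : BddBelow {c : ℝ | ∃ y : Fin n → ℝ, evNorm y = 1 ∧ c = y ⬝ᵥ (M *ᵥ y)} := by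
    refine ⟨-(∑ i, ∑ j, |M i j|), ?_⟩
    rintro c ⟨y, hy, rfl⟩
    have hysum : ∑ i, y i ^ 2 = 1 := Real.sqrt_eq_one.mp hy
    have hyabs : ∀ i, |y i| ≤ 1 := by
      intro i
      rw [← sq_le_one_iff_abs_le_one]
      calc y i ^ 2 ≤ ∑ j, y j ^ 2 :=
            Finset.single_le_sum (fun j _ => sq_nonneg (y j)) (Finset.mem_univ i)
        _ = 1 := hysum
    have hrw : y ⬝ᵥ (M *ᵥ y) = ∑ i, ∑ j, y i * (M i j * y j) := by
      simp [dotProduct, Matrix.mulVec, Finset.mul_sum]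
    rw [hrw, ← Finset.sum_neg_distrib]
    refine Finset.sum_le_sum fun i _ => ?_
    rw [← Finset.sum_neg_distrib]
    refine Finset.sum_le_sum fun j _ => ?_
    have habs : |y i * (M i j * y j)| ≤ |M i j| := by
      rw [abs_mul, abs_mul]
      calc |y i| * (|M i j| * |y j|) ≤ 1 * (|M i j| * 1) := by
            apply mul_le_mul (hyabs i) _ (by positivity) zero_le_one
            exact mul_le_mul_of_nonneg_left (hyabs j) (abs_nonneg _)
        _ = |M i j| := by ring
    linarith [(abs_le.mp habs).1]
  by_cases hx : x = 0
  · subst hx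
    simp [evNorm, Real.sqrt_zero]
  · have hpos : 0 < ∑ i, x i ^ 2 := by
      obtain ⟨i, hi⟩ := Function.ne_iff.mp hx
      exact Finset.sum_pos' (fun j _ => sq_nonneg _)
        ⟨i, Finset.mem_univ i, lt_of_le_of_ne (sq_nonneg _) (Ne.symm (pow_ne_zero 2 hi))⟩
    have hr : 0 < evNorm x := Real.sqrt_pos.mpr hpos
    set r := evNorm x with hrdef
    have hunit : evNorm (r⁻¹ • x) = 1 := by
      have : ∑ i, (r⁻¹ • x) i ^ 2 = (r⁻¹) ^ 2 * ∑ i, x i ^ 2 := by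
        rw [Finset.mul_sum]
        refine Finset.sum_congr rfl fun i _ => ?_
        simp [Pi.smul_apply, smul_eq_mul]; ring
      rw [evNorm, this, Real.sqrt_mul (by positivity), Real.sqrt_sq (by positivity),
        show Real.sqrt (∑ i, x i ^ 2) = r from rfl]
      field_simp
    have hmem : (r⁻¹ • x) ⬝ᵥ (M *ᵥ (r⁻¹ • x)) ∈
        {c : ℝ | ∃ y : Fin n → ℝ, evNorm y = 1 ∧ c = y ⬝ᵥ (M *ᵥ y)} :=
      ⟨r⁻¹ • x, hunit, rfl⟩
    have hle : lambdaMin M ≤ (r⁻¹ • x) ⬝ᵥ (M *ᵥ (r⁻¹ • x)) := csInf_le hbdd hmem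
    have hscale : (r⁻¹ • x) ⬝ᵥ (M *ᵥ (r⁻¹ • x)) = r⁻¹ * (r⁻¹ * (x ⬝ᵥ (M *ᵥ x))) := by
      rw [Matrix.mulVec_smul, smul_dotProduct, dotProduct_smul, smul_eq_mul, smul_eq_mul]
    rw [hscale] at hle
    have h2 : lambdaMin M * r ^ 2 ≤ r⁻¹ * (r⁻¹ * (x ⬝ᵥ (M *ᵥ x))) * r ^ 2 :=
      mul_le_mul_of_nonneg_right hle (sq_nonneg r)
    calc lambdaMin M * r ^ 2 ≤ r⁻¹ * (r⁻¹ * (x ⬝ᵥ (M *ᵥ x))) * r ^ 2 := h2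
      _ = (x ⬝ᵥ (M *ᵥ x)) * (r⁻¹ * r) * (r⁻¹ * r) := by ring
      _ = x ⬝ᵥ (M *ᵥ x) := by rw [inv_mul_cancel₀ hr.ne']; ring

theorem stmt4 (n m T : ℕ)
    (A : Matrix (Fin n) (Fin n) ℝ) (B : Matrix (Fin n) (Fin m) ℝ)
    (Q : Matrix (Fin n) (Fin n) ℝ) (R : Matrix (Fin m) (Fin m) ℝ)
    (P : Matrix (Fin n) (Fin n) ℝ)
    (hQ : Q.PosSemidef) (hR : R.PosDef) (hP : P.PosDef)
    (hDARE : P = Q + Aᵀ * P * A - Aᵀ * P * B * (R + Bᵀ * P * B)⁻¹ * (Bᵀ * P * A))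
    (F : Matrix (Fin n) (Fin n) ℝ)
    (hF : F = A - B * ((R + Bᵀ * P * B)⁻¹ * (Bᵀ * P * A)))
    (Hmat : Matrix (Fin n) (Fin n) ℝ)
    (hHmat : Hmat = B * (R + Bᵀ * P * B)⁻¹ * Bᵀ)
    (x0 : Fin n → ℝ) (w : ℕ → Fin n → ℝ)
    (ψ : ℕ → Fin n → ℝ)
    (hψ : ∀ t, ψ t = ∑ i ∈ Finset.range (T - t), ((Fᵀ) ^ i * P) *ᵥ w (t + i)) :
    (⨅ v : ℕ → Fin m → ℝ, trajCost A B Q R P x0 w T v) =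
      (∑ t ∈ Finset.range T, ψ t ⬝ᵥ ((P⁻¹ - F * P⁻¹ * Fᵀ - Hmat) *ᵥ ψ t))
        + (Fᵀ *ᵥ ψ 0 + P *ᵥ x0) ⬝ᵥ (P⁻¹ *ᵥ (Fᵀ *ᵥ ψ 0 + P *ᵥ x0)) ∧
    lambdaMin (P⁻¹ - F * P⁻¹ * Fᵀ - Hmat) * ∑ t ∈ Finset.range T, evNorm (ψ t) ^ 2 ≤
      ⨅ v : ℕ → Fin m → ℝ, trajCost A B Q R P x0 w T v := by
  classical
  obtain ⟨S, hSdef⟩ : ∃ S : Matrix (Fin m) (Fin m) ℝ, S = R + Bᵀ * P * B := ⟨_, rfl⟩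
  rw [← hSdef] at hDARE hF hHmat
  -- basic facts
  have hPBB : (Bᵀ * P * B).PosSemidef := by
    have h := hP.posSemidef.conjTranspose_mul_mul_same B
    rwa [Matrix.conjTranspose_eq_transpose_of_trivial] at h
  have hSpd : S.PosDef := hSdef ▸ hR.add_posSemidef hPBB
  have hSs : Sᵀ = S := by
    rw [← Matrix.conjTranspose_eq_transpose_of_trivial]; exact hSpd.1
  have hSu : IsUnit S.det := (Matrix.isUnit_iff_isUnit_det S).1 hSpd.isUnit
  have h1 : S * S⁻¹ = 1 := Matrix.mul_nonsing_inv S hSu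
  have h2 : S⁻¹ * S = 1 := Matrix.nonsing_inv_mul S hSu
  have hPs : Pᵀ = P := by
    rw [← Matrix.conjTranspose_eq_transpose_of_trivial]; exact hP.1
  have hPu : IsUnit P.det := (Matrix.isUnit_iff_isUnit_det P).1 hP.isUnit
  have hp1 : P * P⁻¹ = 1 := Matrix.mul_nonsing_inv P hPu
  have hp2 : P⁻¹ * P = 1 := Matrix.nonsing_inv_mul P hPu
  have hQeq : Q = P - Aᵀ * P * A + Aᵀ * P * B * S⁻¹ * (Bᵀ * P * A) := by
    have h := congrArg (fun M : Matrix (Fin n) (Fin n) ℝ =>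
      M - Aᵀ * P * A + Aᵀ * P * B * S⁻¹ * (Bᵀ * P * A)) hDARE
    rw [h]; abel
  have hReq : R = S - Bᵀ * P * B := by rw [hSdef]; abel
  -- ψ facts
  have hψT : ψ T = 0 := by simpa using hψ T
  have hrec : ∀ t, t < T → ψ t = P *ᵥ w t + Fᵀ *ᵥ ψ (t + 1) := by
    intro t ht
    have hk : T - t = (T - (t + 1)) + 1 := by omega
    rw [hψ t, hψ (t + 1), hk, Finset.sum_range_succ', mulVec_sumv, add_comm]
    congr 1
    · simp
    · refine Finset.sum_congr rfl fun i _ => ?_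
      rw [pow_succ', Matrix.mul_assoc, ← Matrix.mulVec_mulVec,
        show t + (i + 1) = t + 1 + i by omega]
  -- the main telescoping identity
  have main : ∀ (v : ℕ → Fin m → ℝ) (k : ℕ), k ≤ T →
      (∑ t ∈ Finset.range k,
          (seqState A B x0 v w t ⬝ᵥ (Q *ᵥ seqState A B x0 v w t) + v t ⬝ᵥ (R *ᵥ v t)))
        + (seqState A B x0 v w k ⬝ᵥ (P *ᵥ seqState A B x0 v w k)
            + 2 * ((Fᵀ *ᵥ ψ k) ⬝ᵥ seqState A B x0 v w k)
            + ∑ s ∈ Finset.Ico k T,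
                (w s ⬝ᵥ (P *ᵥ w s) + 2 * ((Fᵀ *ᵥ ψ (s + 1)) ⬝ᵥ w s)
                  - ψ s ⬝ᵥ (Hmat *ᵥ ψ s)))
      = (x0 ⬝ᵥ (P *ᵥ x0) + 2 * ((Fᵀ *ᵥ ψ 0) ⬝ᵥ x0)
          + ∑ s ∈ Finset.Ico 0 T,
              (w s ⬝ᵥ (P *ᵥ w s) + 2 * ((Fᵀ *ᵥ ψ (s + 1)) ⬝ᵥ w s)
                - ψ s ⬝ᵥ (Hmat *ᵥ ψ s)))
        + ∑ t ∈ Finset.range k,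
            ((v t + S⁻¹ *ᵥ (Bᵀ *ᵥ (P *ᵥ (A *ᵥ seqState A B x0 v w t) + ψ t))) ⬝ᵥ
              (S *ᵥ (v t + S⁻¹ *ᵥ (Bᵀ *ᵥ (P *ᵥ (A *ᵥ seqState A B x0 v w t) + ψ t))))) := by
    intro v k
    induction k with
    | zero => intro _; simp [seqState]
    | succ k ih =>
      intro hk
      have hkT : k < T := by omega
      have hstep := step_id A P Q B R S hPs hSs h1 h2 hQeq hReq F Hmat hF hHmat
        (seqState A B x0 v w k) (v k) (w k) (ψ (k + 1)) (ψ k) (hrec k hkT)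
      have hXs : seqState A B x0 v w (k + 1)
          = A *ᵥ seqState A B x0 v w k + B *ᵥ v k + w k := rfl
      have hIco : ∑ s ∈ Finset.Ico k T,
            (w s ⬝ᵥ (P *ᵥ w s) + 2 * ((Fᵀ *ᵥ ψ (s + 1)) ⬝ᵥ w s) - ψ s ⬝ᵥ (Hmat *ᵥ ψ s))
          = (w k ⬝ᵥ (P *ᵥ w k) + 2 * ((Fᵀ *ᵥ ψ (k + 1)) ⬝ᵥ w k) - ψ k ⬝ᵥ (Hmat *ᵥ ψ k))
            + ∑ s ∈ Finset.Ico (k + 1) T,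
                (w s ⬝ᵥ (P *ᵥ w s) + 2 * ((Fᵀ *ᵥ ψ (s + 1)) ⬝ᵥ w s)
                  - ψ s ⬝ᵥ (Hmat *ᵥ ψ s)) :=
        Finset.sum_eq_sum_Ico_succ_bot hkT _
      rw [Finset.sum_range_succ, Finset.sum_range_succ, hXs]
      have hihk := ih (by omega)
      rw [hIco] at hihk
      linarith [hstep, hihk]
    -- value of the cost for arbitrary control
  obtain ⟨C0, hC0⟩ : ∃ c : ℝ, c = x0 ⬝ᵥ (P *ᵥ x0) + 2 * ((Fᵀ *ᵥ ψ 0) ⬝ᵥ x0)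
      + ∑ s ∈ Finset.Ico 0 T,
          (w s ⬝ᵥ (P *ᵥ w s) + 2 * ((Fᵀ *ᵥ ψ (s + 1)) ⬝ᵥ w s)
            - ψ s ⬝ᵥ (Hmat *ᵥ ψ s)) := ⟨_, rfl⟩
  have key : ∀ v : ℕ → Fin m → ℝ, trajCost A B Q R P x0 w T v
      = C0 + ∑ t ∈ Finset.range T,
            ((v t + S⁻¹ *ᵥ (Bᵀ *ᵥ (P *ᵥ (A *ᵥ seqState A B x0 v w t) + ψ t))) ⬝ᵥ
              (S *ᵥ (v t + S⁻¹ *ᵥ (Bᵀ *ᵥ (P *ᵥ (A *ᵥ seqState A B x0 v w t) + ψ t))))) := by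
    intro v
    have h := main v T le_rfl
    rw [hψT] at h
    simp only [Matrix.mulVec_zero, zero_dotProduct, dotProduct_zero, mul_zero,
      Finset.Ico_self, Finset.sum_empty, add_zero] at h
    rw [← hC0] at h
    unfold trajCost
    linarith [h]
  have quad_nonneg : ∀ d : Fin m → ℝ, 0 ≤ d ⬝ᵥ (S *ᵥ d) := by
    intro d
    have h := hSpd.posSemidef.dotProduct_mulVec_nonneg d
    simpa using h
  have lbC : ∀ v : ℕ → Fin m → ℝ, C0 ≤ trajCost A B Q R P x0 w T v := by
    intro v
    rw [key v]
    have h : (0:ℝ) ≤ ∑ t ∈ Finset.range T,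
        ((v t + S⁻¹ *ᵥ (Bᵀ *ᵥ (P *ᵥ (A *ᵥ seqState A B x0 v w t) + ψ t))) ⬝ᵥ
          (S *ᵥ (v t + S⁻¹ *ᵥ (Bᵀ *ᵥ (P *ᵥ (A *ᵥ seqState A B x0 v w t) + ψ t))))) :=
      Finset.sum_nonneg fun t _ => quad_nonneg _
    linarith
  have hbdd : BddBelow (Set.range fun v : ℕ → Fin m → ℝ => trajCost A B Q R P x0 w T v) := by
    refine ⟨C0, ?_⟩
    rintro _ ⟨v, rfl⟩
    exact lbC v
  -- the optimal control
  let xo : ℕ → Fin n → ℝ := fun t => Nat.rec x0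
    (fun s xs => A *ᵥ xs + B *ᵥ (-(S⁻¹ *ᵥ (Bᵀ *ᵥ (P *ᵥ (A *ᵥ xs) + ψ s)))) + w s) t
  let uo : ℕ → Fin m → ℝ := fun t => -(S⁻¹ *ᵥ (Bᵀ *ᵥ (P *ᵥ (A *ᵥ xo t) + ψ t)))
  have hXo : ∀ t, seqState A B x0 uo w t = xo t := by
    intro t
    induction t with
    | zero => rfl
    | succ t ih =>
      show A *ᵥ seqState A B x0 uo w t + B *ᵥ uo t + w t = _
      rw [ih]
  have hopt : trajCost A B Q R P x0 w T uo = C0 := by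
    rw [key uo]
    have hz : ∀ t ∈ Finset.range T,
        ((uo t + S⁻¹ *ᵥ (Bᵀ *ᵥ (P *ᵥ (A *ᵥ seqState A B x0 uo w t) + ψ t))) ⬝ᵥ
          (S *ᵥ (uo t + S⁻¹ *ᵥ (Bᵀ *ᵥ (P *ᵥ (A *ᵥ seqState A B x0 uo w t) + ψ t))))) = 0 := by
      intro t _
      rw [hXo t]
      have h0 : uo t + S⁻¹ *ᵥ (Bᵀ *ᵥ (P *ᵥ (A *ᵥ xo t) + ψ t)) = 0 := by
        show -(S⁻¹ *ᵥ (Bᵀ *ᵥ (P *ᵥ (A *ᵥ xo t) + ψ t))) + _ = 0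
        exact neg_add_cancel _
      rw [h0]
      simp
    rw [Finset.sum_eq_zero hz, add_zero]
  have hInf : (⨅ v : ℕ → Fin m → ℝ, trajCost A B Q R P x0 w T v) = C0 :=
    le_antisymm (hopt ▸ ciInf_le hbdd uo) (le_ciInf lbC)
  -- identify C0 with the stated expression
  have hψexp : ∀ t, t < T →
      ψ t ⬝ᵥ (P⁻¹ *ᵥ ψ t)
        = w t ⬝ᵥ (P *ᵥ w t) + 2 * ((Fᵀ *ᵥ ψ (t + 1)) ⬝ᵥ w t)
          + ψ (t + 1) ⬝ᵥ ((F * (P⁻¹ * Fᵀ)) *ᵥ ψ (t + 1)) := by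
    intro t ht
    rw [hrec t ht]
    exact Pinv_expand P F hPs hp1 hp2 (w t) (ψ (t + 1))
  have hx0exp : (Fᵀ *ᵥ ψ 0 + P *ᵥ x0) ⬝ᵥ (P⁻¹ *ᵥ (Fᵀ *ᵥ ψ 0 + P *ᵥ x0))
      = x0 ⬝ᵥ (P *ᵥ x0) + 2 * ((Fᵀ *ᵥ ψ 0) ⬝ᵥ x0) + ψ 0 ⬝ᵥ ((F * (P⁻¹ * Fᵀ)) *ᵥ ψ 0) := by
    rw [add_comm (Fᵀ *ᵥ ψ 0) (P *ᵥ x0)]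
    exact Pinv_expand P F hPs hp1 hp2 x0 (ψ 0)
  have hquad_expand : ∀ s, ψ s ⬝ᵥ ((P⁻¹ - F * P⁻¹ * Fᵀ - Hmat) *ᵥ ψ s)
      = ψ s ⬝ᵥ (P⁻¹ *ᵥ ψ s) - ψ s ⬝ᵥ ((F * (P⁻¹ * Fᵀ)) *ᵥ ψ s) - ψ s ⬝ᵥ (Hmat *ᵥ ψ s) := by
    intro s
    rw [Matrix.sub_mulVec, Matrix.sub_mulVec, dotProduct_sub, dotProduct_sub, Matrix.mul_assoc]
  have hshift : ∑ t ∈ Finset.range T, ψ (t + 1) ⬝ᵥ ((F * (P⁻¹ * Fᵀ)) *ᵥ ψ (t + 1))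
      = ∑ t ∈ Finset.range T, ψ t ⬝ᵥ ((F * (P⁻¹ * Fᵀ)) *ᵥ ψ t)
        - ψ 0 ⬝ᵥ ((F * (P⁻¹ * Fᵀ)) *ᵥ ψ 0) := by
    have hA := Finset.sum_range_succ' (fun t => ψ t ⬝ᵥ ((F * (P⁻¹ * Fᵀ)) *ᵥ ψ t)) T
    have hB := Finset.sum_range_succ (fun t => ψ t ⬝ᵥ ((F * (P⁻¹ * Fᵀ)) *ᵥ ψ t)) T
    have hz : ψ T ⬝ᵥ ((F * (P⁻¹ * Fᵀ)) *ᵥ ψ T) = 0 := by rw [hψT]; simp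
    rw [hz] at hB
    linarith
  have hEsum : ∑ s ∈ Finset.Ico 0 T,
      (w s ⬝ᵥ (P *ᵥ w s) + 2 * ((Fᵀ *ᵥ ψ (s + 1)) ⬝ᵥ w s) - ψ s ⬝ᵥ (Hmat *ᵥ ψ s))
      = ∑ t ∈ Finset.range T, ψ t ⬝ᵥ ((P⁻¹ - F * P⁻¹ * Fᵀ - Hmat) *ᵥ ψ t)
        + ψ 0 ⬝ᵥ ((F * (P⁻¹ * Fᵀ)) *ᵥ ψ 0) := by
    rw [← Finset.range_eq_Ico]
    have h1' : ∀ s ∈ Finset.range T,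
        w s ⬝ᵥ (P *ᵥ w s) + 2 * ((Fᵀ *ᵥ ψ (s + 1)) ⬝ᵥ w s) - ψ s ⬝ᵥ (Hmat *ᵥ ψ s)
        = (ψ s ⬝ᵥ (P⁻¹ *ᵥ ψ s) - ψ s ⬝ᵥ (Hmat *ᵥ ψ s))
          - ψ (s + 1) ⬝ᵥ ((F * (P⁻¹ * Fᵀ)) *ᵥ ψ (s + 1)) := by
      intro s hs
      have h := hψexp s (Finset.mem_range.mp hs)
      linarith
    rw [Finset.sum_congr rfl h1', Finset.sum_sub_distrib, Finset.sum_sub_distrib, hshift,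
      Finset.sum_congr rfl (fun s _ => hquad_expand s), Finset.sum_sub_distrib,
      Finset.sum_sub_distrib]
    ring
  have hC0eq : C0 = (∑ t ∈ Finset.range T, ψ t ⬝ᵥ ((P⁻¹ - F * P⁻¹ * Fᵀ - Hmat) *ᵥ ψ t))
      + (Fᵀ *ᵥ ψ 0 + P *ᵥ x0) ⬝ᵥ (P⁻¹ *ᵥ (Fᵀ *ᵥ ψ 0 + P *ᵥ x0)) := by
    rw [hC0, hEsum, hx0exp]
    ring
  constructor
  · rw [hInf, hC0eq]
  · rw [hInf, hC0eq]
    have hpos0 : 0 ≤ (Fᵀ *ᵥ ψ 0 + P *ᵥ x0) ⬝ᵥ (P⁻¹ *ᵥ (Fᵀ *ᵥ ψ 0 + P *ᵥ x0)) := by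
      have h := hP.inv.posSemidef.dotProduct_mulVec_nonneg (Fᵀ *ᵥ ψ 0 + P *ᵥ x0)
      simpa using h
    have hlb : ∀ t ∈ Finset.range T,
        lambdaMin (P⁻¹ - F * P⁻¹ * Fᵀ - Hmat) * evNorm (ψ t) ^ 2
          ≤ ψ t ⬝ᵥ ((P⁻¹ - F * P⁻¹ * Fᵀ - Hmat) *ᵥ ψ t) :=
      fun t _ => lambdaMin_mul_le _ _
    have hs := Finset.sum_le_sum hlb
    rw [← Finset.mul_sum] at hs
    linarith
end

section
/- Let H be an n×n real symmetric positive semidefinite matrix, let ρ ≥ 0, and let M be a T×T real matrix with nonnegative entries such that every row sum and every column sum of M is at most ρ. Let η_0,…,η_{T−1}, ψ_0,…,ψ_{T−1} ∈ ℝ^n satisfy ‖η_t‖ ≤ Σ_{s=0}^{T−1} M_{t,s} ‖ψ_s‖ for every t. Then Σ_{t=0}^{T−1} η_tᵀ H η_t ≤ ρ² ‖H‖ Σ_{t=0}^{T−1} ‖ψ_t‖². -/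
open Matrix

lemma evNorm_nonneg {n : ℕ} (x : Fin n → ℝ) : 0 ≤ evNorm x := Real.sqrt_nonneg _

lemma evNorm_sq {n : ℕ} (x : Fin n → ℝ) : evNorm x ^ 2 = ∑ i, x i ^ 2 :=
  Real.sq_sqrt (by positivity)

lemma evNorm_eq_zero {n : ℕ} (x : Fin n → ℝ) (hx : evNorm x = 0) : x = 0 := by
  have h : ∑ i, x i ^ 2 = 0 := by
    have := Real.sqrt_eq_zero (by positivity : (0:ℝ) ≤ ∑ i, x i ^ 2)
    exact this.mp hx
  funext i
  have := (Finset.sum_eq_zero_iff_of_nonneg (fun i _ => sq_nonneg (x i))).mp h i (Finset.mem_univ i)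
  exact pow_eq_zero_iff (by norm_num) |>.mp this

lemma evNorm_smul {n : ℕ} (c : ℝ) (x : Fin n → ℝ) : evNorm (c • x) = |c| * evNorm x := by
  unfold evNorm
  rw [← Real.sqrt_sq_eq_abs, ← Real.sqrt_mul (sq_nonneg c), Finset.mul_sum]
  congr 1
  refine Finset.sum_congr rfl fun i _ => ?_
  simp [mul_pow]

lemma evNorm_zero {n : ℕ} : evNorm (0 : Fin n → ℝ) = 0 := by simp [evNorm]

lemma specSet_bddAbove {n m : ℕ} (A : Matrix (Fin n) (Fin m) ℝ) :
    BddAbove {c : ℝ | ∃ x : Fin m → ℝ, evNorm x ≤ 1 ∧ c = evNorm (A *ᵥ x)} := by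
  refine ⟨Real.sqrt (∑ i, ∑ j, A i j ^ 2), ?_⟩
  rintro c ⟨x, hx, rfl⟩
  unfold evNorm
  apply Real.sqrt_le_sqrt
  have hx2 : ∑ j, x j ^ 2 ≤ 1 := by
    have := evNorm_sq x
    nlinarith [evNorm_nonneg x]
  refine Finset.sum_le_sum fun i _ => ?_
  calc (A *ᵥ x) i ^ 2 = (∑ j, A i j * x j) ^ 2 := by rfl
    _ ≤ (∑ j, A i j ^ 2) * ∑ j, x j ^ 2 := Finset.sum_mul_sq_le_sq_mul_sq _ _ _
    _ ≤ (∑ j, A i j ^ 2) * 1 := by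
        apply mul_le_mul_of_nonneg_left hx2 (by positivity)
    _ = ∑ j, A i j ^ 2 := mul_one _

lemma specNorm_nonneg {n m : ℕ} (A : Matrix (Fin n) (Fin m) ℝ) : 0 ≤ specNorm A := by
  apply le_csSup (specSet_bddAbove A)
  exact ⟨0, by simp [evNorm_zero], by simp [evNorm_zero]⟩

lemma evNorm_mulVec_le {n m : ℕ} (A : Matrix (Fin n) (Fin m) ℝ) (x : Fin m → ℝ) :
    evNorm (A *ᵥ x) ≤ specNorm A * evNorm x := by
  rcases eq_or_lt_of_le (evNorm_nonneg x) with h | h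
  · have hx0 : x = 0 := evNorm_eq_zero x h.symm
    simp [hx0, evNorm_zero]
  · have hinv : evNorm ((evNorm x)⁻¹ • x) = 1 := by
      rw [evNorm_smul, abs_of_pos (by positivity)]
      field_simp
    have hmem : evNorm (A *ᵥ ((evNorm x)⁻¹ • x)) ∈
        {c : ℝ | ∃ y : Fin m → ℝ, evNorm y ≤ 1 ∧ c = evNorm (A *ᵥ y)} :=
      ⟨_, le_of_eq hinv, rfl⟩
    have hle := le_csSup (specSet_bddAbove A) hmem
    rw [Matrix.mulVec_smul, evNorm_smul, abs_of_pos (by positivity)] at hle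
    have hle' : (evNorm x)⁻¹ * evNorm (A *ᵥ x) ≤ specNorm A := hle
    calc evNorm (A *ᵥ x) = evNorm x * ((evNorm x)⁻¹ * evNorm (A *ᵥ x)) := by
          field_simp
      _ ≤ evNorm x * specNorm A := mul_le_mul_of_nonneg_left hle' h.le
      _ = specNorm A * evNorm x := mul_comm _ _

lemma dotProduct_le {n : ℕ} (x y : Fin n → ℝ) : x ⬝ᵥ y ≤ evNorm x * evNorm y :=
  Real.sum_mul_le_sqrt_mul_sqrt _ _ _

lemma quad_le {n : ℕ} (A : Matrix (Fin n) (Fin n) ℝ) (x : Fin n → ℝ) :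
    x ⬝ᵥ (A *ᵥ x) ≤ specNorm A * evNorm x ^ 2 := by
  calc x ⬝ᵥ (A *ᵥ x) ≤ evNorm x * evNorm (A *ᵥ x) := dotProduct_le _ _
    _ ≤ evNorm x * (specNorm A * evNorm x) :=
        mul_le_mul_of_nonneg_left (evNorm_mulVec_le A x) (evNorm_nonneg x)
    _ = specNorm A * evNorm x ^ 2 := by ring

theorem stmt8 (n T : ℕ) (H : Matrix (Fin n) (Fin n) ℝ) (hH : H.PosSemidef)
    (ρ : ℝ) (hρ : 0 ≤ ρ)
    (M : Matrix (Fin T) (Fin T) ℝ) (hM : ∀ t s, 0 ≤ M t s)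
    (hrow : ∀ t, ∑ s, M t s ≤ ρ) (hcol : ∀ s, ∑ t, M t s ≤ ρ)
    (η ψ : Fin T → Fin n → ℝ)
    (hηψ : ∀ t, evNorm (η t) ≤ ∑ s, M t s * evNorm (ψ s)) :
    ∑ t, η t ⬝ᵥ (H *ᵥ η t) ≤ ρ ^ 2 * specNorm H * ∑ t, evNorm (ψ t) ^ 2 := by
  set a : Fin T → ℝ := fun s => evNorm (ψ s) with ha
  have hstep : ∀ t, η t ⬝ᵥ (H *ᵥ η t) ≤ specNorm H * (ρ * ∑ s, M t s * a s ^ 2) := by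
    intro t
    have h1 : η t ⬝ᵥ (H *ᵥ η t) ≤ specNorm H * evNorm (η t) ^ 2 := quad_le H (η t)
    have h2 : evNorm (η t) ^ 2 ≤ (∑ s, M t s * a s) ^ 2 :=
      pow_le_pow_left₀ (evNorm_nonneg _) (hηψ t) 2
    have h3 : (∑ s, M t s * a s) ^ 2 ≤ (∑ s, M t s) * ∑ s, M t s * a s ^ 2 := by
      have key := Finset.sum_mul_sq_le_sq_mul_sq Finset.univ
        (fun s => Real.sqrt (M t s)) (fun s => Real.sqrt (M t s) * a s)
      have e1 : ∀ s : Fin T, Real.sqrt (M t s) * (Real.sqrt (M t s) * a s) = M t s * a s := by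
        intro s; rw [← mul_assoc, Real.mul_self_sqrt (hM t s)]
      have e2 : ∀ s : Fin T, Real.sqrt (M t s) ^ 2 = M t s := fun s => Real.sq_sqrt (hM t s)
      have e3 : ∀ s : Fin T, (Real.sqrt (M t s) * a s) ^ 2 = M t s * a s ^ 2 := by
        intro s; rw [mul_pow, Real.sq_sqrt (hM t s)]
      simpa only [e1, e2, e3] using key
    have h4 : (∑ s, M t s) * ∑ s, M t s * a s ^ 2 ≤ ρ * ∑ s, M t s * a s ^ 2 := by
      apply mul_le_mul_of_nonneg_right (hrow t)
      exact Finset.sum_nonneg fun s _ => mul_nonneg (hM t s) (sq_nonneg _)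
    calc η t ⬝ᵥ (H *ᵥ η t) ≤ specNorm H * evNorm (η t) ^ 2 := h1
      _ ≤ specNorm H * (ρ * ∑ s, M t s * a s ^ 2) := by
          apply mul_le_mul_of_nonneg_left _ (specNorm_nonneg H)
          exact le_trans h2 (le_trans h3 h4)
  calc ∑ t, η t ⬝ᵥ (H *ᵥ η t)
      ≤ ∑ t, specNorm H * (ρ * ∑ s, M t s * a s ^ 2) :=
        Finset.sum_le_sum fun t _ => hstep t
    _ = specNorm H * ρ * ∑ s, (∑ t, M t s) * a s ^ 2 := by
        simp_rw [← Finset.mul_sum, Finset.sum_mul]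
        rw [Finset.sum_comm]
        ring_nf
    _ ≤ specNorm H * ρ * ∑ s, ρ * a s ^ 2 := by
        apply mul_le_mul_of_nonneg_left _ (mul_nonneg (specNorm_nonneg H) hρ)
        exact Finset.sum_le_sum fun s _ =>
          mul_le_mul_of_nonneg_right (hcol s) (sq_nonneg _)
    _ = ρ ^ 2 * specNorm H * ∑ t, a t ^ 2 := by
        rw [← Finset.mul_sum]; ring
end
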